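/- arXiv:1907.07806 — 3 statements merged into one kernel-verified Lean document; each statement's English description precedes it below -/
import Mathlib

section
/- (Lemma 2.1) The adjoint S* : L²(Γ) → ℝ^{n_D} of the harmonic extension operator S possesses the representation S* = −K∘P; that is, for every y ∈ L²(Γ) and every z ∈ ℝ^{n_D} one has (y, S z)_{L²(Γ)} = −(K(Py))ᵀ z, where P : L²(Γ) → H¹_D(Γ) is defined by Py = p with a(v,p) = (y,v)_{L²(Γ)} for all v ∈ H¹_D(Γ), and K is the Kirchhoff operator evaluated at the Dirichlet vertices. -/
open MeasureTheory Set

/-- A metric graph: a finite graph where each edge `e` is identified with the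
interval `[0, len e]`, with `src e` sitting at coordinate `0` and `dst e` at `len e`. -/
structure MGraph where
  V : Type
  E : Type
  fintV : Fintype V
  fintE : Fintype E
  decV : DecidableEq V
  src : E → V
  dst : E → V
  len : E → ℝ
  len_pos : ∀ e, 0 < len e

attribute [instance] MGraph.fintV MGraph.fintE MGraph.decV

/-- A function on the metric graph, given edgewise. -/
abbrev GFun (G : MGraph) := G.E → ℝ → ℝ

namespace MGraph

variable (G : MGraph)

/-- The derivative along edge `e` (within the edge interval). -/
noncomputable def edgeDeriv (y : GFun G) (e : G.E) : ℝ → ℝ :=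
  derivWithin (y e) (Icc (0:ℝ) (G.len e))

/-- The second derivative along edge `e`. -/
noncomputable def edgeDeriv2 (y : GFun G) (e : G.E) : ℝ → ℝ :=
  derivWithin (G.edgeDeriv y e) (Icc (0:ℝ) (G.len e))

/-- The `L²(Γ)` inner product `(f,g) = Σ_e ∫_e f g`. -/
noncomputable def ip2 (f g : GFun G) : ℝ :=
  ∑ e : G.E, ∫ x in (0:ℝ)..(G.len e), f e x * g e x

/-- The bilinear form `a(y,w) = Σ_e ∫_e (y' w' + c₀ y w)`. -/
noncomputable def bform (c0 y w : GFun G) : ℝ :=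
  ∑ e : G.E, ∫ x in (0:ℝ)..(G.len e),
    (G.edgeDeriv y e x * G.edgeDeriv w e x + c0 e x * y e x * w e x)

/-- Membership in `L²(Γ)` (edgewise square integrability). -/
def MemL2 (f : GFun G) : Prop :=
  ∀ e, IntervalIntegrable (fun x => (f e x)^2) volume 0 (G.len e)

/-- The squared `L²(Γ)`-norm. -/
noncomputable def l2normSq (f : GFun G) : ℝ :=
  ∑ e : G.E, ∫ x in (0:ℝ)..(G.len e), (f e x)^2

/-- The squared `H¹(Γ)`-norm. -/
noncomputable def h1normSq (y : GFun G) : ℝ :=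
  G.l2normSq y + ∑ e : G.E, ∫ x in (0:ℝ)..(G.len e), (G.edgeDeriv y e x)^2

/-- The squared `H²(Γ)`-seminorm `Σ_e ‖y''‖²`. -/
noncomputable def h2semiSq (y : GFun G) : ℝ :=
  ∑ e : G.E, ∫ x in (0:ℝ)..(G.len e), (G.edgeDeriv2 y e x)^2

/-- Membership in `H¹(Γ)` with vertex values `yv` (in particular continuity
at the vertices of the graph). -/
def MemH1 (y : GFun G) (yv : G.V → ℝ) : Prop :=
  (∀ e, ContinuousOn (y e) (Icc (0:ℝ) (G.len e))) ∧
  (∀ e, ∃ s : Finset ℝ, ∀ x ∈ Icc (0:ℝ) (G.len e), x ∉ s →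
      DifferentiableWithinAt ℝ (y e) (Icc (0:ℝ) (G.len e)) x) ∧
  (∀ e, y e 0 = yv (G.src e)) ∧
  (∀ e, y e (G.len e) = yv (G.dst e)) ∧
  G.MemL2 y ∧
  (∀ e, IntervalIntegrable (fun x => (G.edgeDeriv y e x)^2) volume 0 (G.len e))

/-- Membership in `H¹_D(Γ)`: `H¹(Γ)` with vanishing values at the Dirichlet vertices. -/
def MemH1D (VD : Finset G.V) (y : GFun G) (yv : G.V → ℝ) : Prop :=
  G.MemH1 y yv ∧ ∀ v ∈ VD, yv v = 0

/-- Membership in `H²(Γ)` (edgewise; the function is `C¹` on each closed edge and the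
first derivative is again weakly differentiable with square-integrable derivative). -/
def MemH2 (y : GFun G) : Prop :=
  (∀ e, ∀ x ∈ Icc (0:ℝ) (G.len e), DifferentiableWithinAt ℝ (y e) (Icc (0:ℝ) (G.len e)) x) ∧
  (∀ e, ContinuousOn (G.edgeDeriv y e) (Icc (0:ℝ) (G.len e))) ∧
  (∀ e, ∀ᵐ x ∂(volume.restrict (Ioo (0:ℝ) (G.len e))),
      DifferentiableWithinAt ℝ (G.edgeDeriv y e) (Icc (0:ℝ) (G.len e)) x) ∧
  (∀ e, IntervalIntegrable (fun x => (G.edgeDeriv2 y e x)^2) volume 0 (G.len e))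

/-- The Kirchhoff operator `(Ky)(v) = Σ_{e ∈ E_v} y|_e'(v)`, where the derivative along each
incident edge is taken in the direction pointing towards `v`. -/
noncomputable def Kop (y : GFun G) (v : G.V) : ℝ :=
  ∑ e : G.E, ((if G.dst e = v then G.edgeDeriv y e (G.len e) else 0)
    - (if G.src e = v then G.edgeDeriv y e 0 else 0))

/-- Adjacency of vertices. -/
def Adj (v w : G.V) : Prop :=
  ∃ e, (G.src e = v ∧ G.dst e = w) ∨ (G.src e = w ∧ G.dst e = v)

/-- Connectedness of the graph. -/
def Connected : Prop := ∀ v w : G.V, Relation.ReflTransGen G.Adj v w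

/-- The Euclidean norm of the restriction of `u` to the Dirichlet vertex set. -/
noncomputable def dnorm (VD : Finset G.V) (u : G.V → ℝ) : ℝ :=
  Real.sqrt (∑ v ∈ VD, (u v)^2)

/-- `y` is affine on each cell of the equidistant grid with `n e` subintervals on edge `e`. -/
def PiecewiseAffine (n : G.E → ℕ) (y : GFun G) : Prop :=
  ∀ e, ∀ k : ℕ, k < n e →
    ∃ p q : ℝ, ∀ x ∈ Icc ((k : ℝ) * (G.len e / (n e : ℝ))) (((k : ℝ) + 1) * (G.len e / (n e : ℝ))),
      y e x = p * x + q

/-- Membership in the finite element space `V_h` (continuous, edgewise piecewise affine). -/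
def MemVh (n : G.E → ℕ) (y : GFun G) (yv : G.V → ℝ) : Prop :=
  G.MemH1 y yv ∧ G.PiecewiseAffine n y

/-- Membership in `V_{h,D} = V_h ∩ H¹_D(Γ)`. -/
def MemVhD (VD : Finset G.V) (n : G.E → ℕ) (y : GFun G) (yv : G.V → ℝ) : Prop :=
  G.MemVh n y yv ∧ ∀ v ∈ VD, yv v = 0

/-- The nodal (hat) basis function of `V_h` attached to the vertex `v`. -/
noncomputable def hatFn (n : G.E → ℕ) (v : G.V) : GFun G :=
  fun e x =>
    (if G.src e = v then max 0 (1 - x / (G.len e / (n e : ℝ))) else 0)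
    + (if G.dst e = v then max 0 (1 - (G.len e - x) / (G.len e / (n e : ℝ))) else 0)

/-- The discrete (variational) Kirchhoff operator applied to `p_h = P_h ydata`:
`(K_h p_h)(v) = a(φ_v, p_h) - (ydata, φ_v)`. -/
noncomputable def Khop (c0 : GFun G) (n : G.E → ℕ) (ydata ph : GFun G) (v : G.V) : ℝ :=
  G.bform c0 (G.hatFn n v) ph - G.ip2 ydata (G.hatFn n v)

/-- The objective functional `½‖y-ȳ‖² + (β/2)|u|₂²` of the optimal control problem. -/
noncomputable def objective (VD : Finset G.V) (ybar : GFun G) (β : ℝ)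
    (u : G.V → ℝ) (y : GFun G) : ℝ :=
  (1/2) * G.l2normSq (fun e x => y e x - ybar e x) + (β/2) * ∑ v ∈ VD, (u v)^2

/-- `(u, y)` is feasible for the continuous optimal control problem:
`y` is a weak solution of the state equation with Dirichlet data `u`. -/
def Feasible (VD : Finset G.V) (c0 f : GFun G) (u : G.V → ℝ)
    (y : GFun G) (yv : G.V → ℝ) : Prop :=
  G.MemH1 y yv ∧ (∀ v ∈ VD, yv v = u v) ∧
  ∀ w wv, G.MemH1D VD w wv → G.bform c0 y w = G.ip2 f w

/-- `(u, y)` is feasible for the discretized optimal control problem: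
`y ∈ V_h` is a Galerkin solution of the state equation with Dirichlet data `u`. -/
def FeasibleH (VD : Finset G.V) (n : G.E → ℕ) (c0 f : GFun G) (u : G.V → ℝ)
    (y : GFun G) (yv : G.V → ℝ) : Prop :=
  G.MemVh n y yv ∧ (∀ v ∈ VD, yv v = u v) ∧
  ∀ w wv, G.MemVhD VD n w wv → G.bform c0 y w = G.ip2 f w

/-- The edgewise-affine extension `S̃_h u` of Dirichlet data `u` (value `u v` at Dirichlet
vertices, `0` at Kirchhoff vertices, affine along each whole edge). -/
noncomputable def tildeExt (VD : Finset G.V) (u : G.V → ℝ) : GFun G :=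
  fun e x =>
    (if G.src e ∈ VD then u (G.src e) else 0)
    + ((if G.dst e ∈ VD then u (G.dst e) else 0)
        - (if G.src e ∈ VD then u (G.src e) else 0)) * x / G.len e

end MGraph

namespace AdjointAux
open Filter


noncomputable def cutF (L ε x : ℝ) : ℝ := min 1 (min (x/ε) ((L-x)/ε))

noncomputable def cutD (L ε x : ℝ) : ℝ :=
  if x < ε then 1/ε else if L - ε < x then -(1/ε) else 0

lemma cutF_cont (L ε : ℝ) : Continuous (cutF L ε) := by
  unfold cutF; fun_prop

lemma cutD_meas (L ε : ℝ) : Measurable (cutD L ε) := by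
  unfold cutD
  exact Measurable.ite measurableSet_Iio measurable_const
    (Measurable.ite measurableSet_Ioi measurable_const measurable_const)

lemma cutF_zero {L ε : ℝ} (hε : 0 < ε) (hL : 0 ≤ L) : cutF L ε 0 = 0 := by
  unfold cutF
  rw [zero_div, min_eq_left (div_nonneg (by linarith) hε.le), min_eq_right zero_le_one]

lemma cutF_len {L ε : ℝ} (hε : 0 < ε) (hL : 0 ≤ L) : cutF L ε L = 0 := by
  unfold cutF
  rw [sub_self, zero_div, min_eq_right (div_nonneg hL hε.le), min_eq_right zero_le_one]

lemma cutF_le_one (L ε x : ℝ) : cutF L ε x ≤ 1 := min_le_left _ _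

lemma cutF_nonneg {L ε x : ℝ} (hε : 0 < ε) (hx : x ∈ Icc 0 L) : 0 ≤ cutF L ε x :=
  le_min zero_le_one (le_min (div_nonneg hx.1 hε.le)
    (div_nonneg (by linarith [hx.2]) hε.le))

lemma cutF_abs_le_one {L ε x : ℝ} (hε : 0 < ε) (hx : x ∈ Icc 0 L) : |cutF L ε x| ≤ 1 := by
  rw [abs_of_nonneg (cutF_nonneg hε hx)]; exact cutF_le_one L ε x

lemma cutF_eq_one {L ε x : ℝ} (hε : 0 < ε) (h1 : ε ≤ x) (h2 : x ≤ L - ε) :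
    cutF L ε x = 1 := by
  have ha : (1:ℝ) ≤ x/ε := (one_le_div hε).2 h1
  have hb : (1:ℝ) ≤ (L-x)/ε := (one_le_div hε).2 (by linarith)
  unfold cutF
  rw [min_eq_left (le_min ha hb)]

lemma cutD_abs_le {L ε x : ℝ} (hε : 0 < ε) : |cutD L ε x| ≤ 1/ε := by
  unfold cutD
  split_ifs
  · rw [abs_of_nonneg (by positivity)]
  · rw [abs_neg, abs_of_nonneg (by positivity)]
  · rw [abs_zero]; positivity

lemma cutF_hasDerivAt {L ε x : ℝ} (hε : 0 < ε) (hεL : ε < L/2)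
    (h1 : x ≠ ε) (h2 : x ≠ L - ε) :
    HasDerivAt (cutF L ε) (cutD L ε x) x := by
  rcases lt_or_gt_of_ne h1 with hlt | hgt
  · -- cutF = (·/ε) on Iio ε
    have heq : EqOn (cutF L ε) (fun z => z/ε) (Iio ε) := by
      intro z hz
      have hz' : z < ε := hz
      have hmin : z/ε ≤ (L-z)/ε := (div_le_div_iff_of_pos_right hε).2 (by linarith)
      unfold cutF
      rw [min_eq_left hmin, min_eq_right (by rw [div_le_one hε]; linarith)]
    have hd : HasDerivAt (fun z => z/ε) (1/ε) x := (hasDerivAt_id x).div_const ε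
    have hDx : cutD L ε x = 1/ε := if_pos hlt
    rw [hDx]
    exact hd.congr_of_eventuallyEq
      (Filter.eventuallyEq_of_mem (Iio_mem_nhds hlt) heq)
  · rcases lt_or_gt_of_ne h2 with hlt2 | hgt2
    · -- cutF = 1 on Ioo ε (L-ε)
      have heq : EqOn (cutF L ε) (fun _ => (1:ℝ)) (Ioo ε (L-ε)) :=
        fun z hz => cutF_eq_one hε hz.1.le hz.2.le
      have hDx : cutD L ε x = 0 := by
        unfold cutD; rw [if_neg (not_lt.2 hgt.le), if_neg (not_lt.2 hlt2.le)]
      rw [hDx]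
      exact (hasDerivAt_const x (1:ℝ)).congr_of_eventuallyEq
        (Filter.eventuallyEq_of_mem (Ioo_mem_nhds hgt hlt2) heq)
    · -- cutF = (L-·)/ε on Ioi (L-ε)
      have heq : EqOn (cutF L ε) (fun z => (L-z)/ε) (Ioi (L-ε)) := by
        intro z hz
        have hz' : L - ε < z := hz
        have hmin : (L-z)/ε ≤ z/ε := (div_le_div_iff_of_pos_right hε).2 (by linarith)
        unfold cutF
        rw [min_eq_right hmin, min_eq_right (by rw [div_le_one hε]; linarith)]
      have hd : HasDerivAt (fun z => (L-z)/ε) (-(1/ε)) x := by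
        have h0 : HasDerivAt (fun z : ℝ => L - z) (-1) x := by
          simpa using (hasDerivAt_id x).const_sub L
        have := h0.div_const ε
        rw [neg_div] at this; exact this
      have hDx : cutD L ε x = -(1/ε) := by
        unfold cutD
        rw [if_neg (not_lt.2 (by linarith : ε ≤ x)), if_pos hgt2]
      rw [hDx]
      exact hd.congr_of_eventuallyEq
        (Filter.eventuallyEq_of_mem (Ioi_mem_nhds hgt2) heq)



lemma ae_aux (L : ℝ) (t : Finset ℝ) :
    ∀ᵐ x ∂(volume.restrict (Ioc (0:ℝ) L)), x ∈ Ioo (0:ℝ) L ∧ x ∉ t := by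
  refine (ae_restrict_iff' measurableSet_Ioc).2 ?_
  have h0 : volume ({L} ∪ (t : Set ℝ)) = 0 :=
    Set.Finite.measure_zero ((Set.finite_singleton L).union t.finite_toSet) _
  filter_upwards [(measure_eq_zero_iff_ae_notMem).1 h0] with x hx hxIoc
  refine ⟨⟨hxIoc.1, lt_of_le_of_ne hxIoc.2 ?_⟩, fun hxt => hx (Or.inr hxt)⟩
  exact fun h => hx (Or.inl (by simp [h]))

lemma tendsto_avg_left {L : ℝ} (hL : 0 < L) {h : ℝ → ℝ} (hc : ContinuousOn h (Icc 0 L))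
    {ε : ℕ → ℝ} (hε : ∀ n, 0 < ε n) (hεle : ∀ n, ε n ≤ L)
    (hεto : Tendsto ε atTop (nhds 0)) :
    Tendsto (fun n => (1/(ε n)) * ∫ x in (0:ℝ)..(ε n), h x) atTop (nhds (h 0)) := by
  rw [Metric.tendsto_atTop]
  intro δ hδ
  have hcw : ContinuousWithinAt h (Icc 0 L) 0 := hc 0 ⟨le_refl 0, hL.le⟩
  rcases Metric.continuousWithinAt_iff.1 hcw (δ/2) (by linarith) with ⟨r, hr, hball⟩
  rcases Metric.tendsto_atTop.1 hεto r hr with ⟨N, hN⟩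
  refine ⟨N, fun n hn => ?_⟩
  set e := ε n with he_def
  have he : 0 < e := hε n
  have heL : e ≤ L := hεle n
  have her : e < r := by
    have := hN n hn
    rw [Real.dist_eq, sub_zero, abs_of_pos he] at this
    exact this
  have hint : IntervalIntegrable h volume 0 e := by
    apply ContinuousOn.intervalIntegrable
    rw [uIcc_of_le he.le]
    exact hc.mono (Icc_subset_Icc le_rfl heL)
  have hsub : (∫ x in (0:ℝ)..e, h x) - e * h 0 = ∫ x in (0:ℝ)..e, (h x - h 0) := by
    rw [intervalIntegral.integral_sub hint intervalIntegrable_const,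
      intervalIntegral.integral_const]
    simp [smul_eq_mul]
  have hbound : |∫ x in (0:ℝ)..e, (h x - h 0)| ≤ (δ/2) * |e - 0| := by
    rw [← Real.norm_eq_abs]
    apply intervalIntegral.norm_integral_le_of_norm_le_const
    intro x hx
    rw [uIoc_of_le he.le] at hx
    have hxI : x ∈ Icc (0:ℝ) L := ⟨hx.1.le, le_trans hx.2 heL⟩
    have hdist : dist x 0 < r := by
      rw [Real.dist_eq, sub_zero, abs_of_pos hx.1]
      exact lt_of_le_of_lt hx.2 her
    exact (le_of_lt (hball hxI hdist))
  rw [Real.dist_eq]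
  have key : (1/e) * (∫ x in (0:ℝ)..e, h x) - h 0
      = (1/e) * ((∫ x in (0:ℝ)..e, h x) - e * h 0) := by
    field_simp
  rw [key, abs_mul, abs_of_pos (by positivity : (0:ℝ) < 1/e), hsub]
  calc 1/e * |∫ x in (0:ℝ)..e, (h x - h 0)| ≤ 1/e * ((δ/2) * |e - 0|) := by
        apply mul_le_mul_of_nonneg_left hbound (by positivity)
    _ = δ/2 := by rw [sub_zero, abs_of_pos he]; field_simp
    _ < δ := by linarith

lemma tendsto_avg_right {L : ℝ} (hL : 0 < L) {h : ℝ → ℝ} (hc : ContinuousOn h (Icc 0 L))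
    {ε : ℕ → ℝ} (hε : ∀ n, 0 < ε n) (hεle : ∀ n, ε n ≤ L)
    (hεto : Tendsto ε atTop (nhds 0)) :
    Tendsto (fun n => (1/(ε n)) * ∫ x in (L - ε n)..L, h x) atTop (nhds (h L)) := by
  rw [Metric.tendsto_atTop]
  intro δ hδ
  have hcw : ContinuousWithinAt h (Icc 0 L) L := hc L ⟨hL.le, le_refl L⟩
  rcases Metric.continuousWithinAt_iff.1 hcw (δ/2) (by linarith) with ⟨r, hr, hball⟩
  rcases Metric.tendsto_atTop.1 hεto r hr with ⟨N, hN⟩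
  refine ⟨N, fun n hn => ?_⟩
  set e := ε n with he_def
  have he : 0 < e := hε n
  have heL : e ≤ L := hεle n
  have her : e < r := by
    have := hN n hn
    rw [Real.dist_eq, sub_zero, abs_of_pos he] at this
    exact this
  have hle : L - e ≤ L := by linarith
  have hint : IntervalIntegrable h volume (L-e) L := by
    apply ContinuousOn.intervalIntegrable
    rw [uIcc_of_le hle]
    exact hc.mono (Icc_subset_Icc (by linarith) le_rfl)
  have hsub : (∫ x in (L-e)..L, h x) - e * h L = ∫ x in (L-e)..L, (h x - h L) := by
    rw [intervalIntegral.integral_sub hint intervalIntegrable_const,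
      intervalIntegral.integral_const]
    have : L - (L - e) = e := by ring
    rw [this]
    simp [smul_eq_mul]
  have hbound : |∫ x in (L-e)..L, (h x - h L)| ≤ (δ/2) * |L - (L-e)| := by
    rw [← Real.norm_eq_abs]
    apply intervalIntegral.norm_integral_le_of_norm_le_const
    intro x hx
    rw [uIoc_of_le hle] at hx
    have hxI : x ∈ Icc (0:ℝ) L := ⟨le_trans (by linarith) hx.1.le, hx.2⟩
    have hdist : dist x L < r := by
      rw [Real.dist_eq, abs_of_nonpos (by linarith [hx.2])]
      have : L - x < e := by linarith [hx.1]
      linarith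
    exact (le_of_lt (hball hxI hdist))
  rw [Real.dist_eq]
  have key : (1/e) * (∫ x in (L-e)..L, h x) - h L
      = (1/e) * ((∫ x in (L-e)..L, h x) - e * h L) := by
    field_simp
  rw [key, abs_mul, abs_of_pos (by positivity : (0:ℝ) < 1/e), hsub]
  have habs : |L - (L-e)| = e := by rw [abs_of_pos (by linarith)] <;> ring
  calc 1/e * |∫ x in (L-e)..L, (h x - h L)| ≤ 1/e * ((δ/2) * |L - (L-e)|) := by
        apply mul_le_mul_of_nonneg_left hbound (by positivity)
    _ = δ/2 := by rw [habs]; field_simp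
    _ < δ := by linarith

lemma eps_tendsto (L : ℝ) :
    Tendsto (fun n : ℕ => L/((n:ℝ)+3)) atTop (nhds 0) := by
  apply Tendsto.div_atTop (tendsto_const_nhds (x := L))
  exact tendsto_atTop_add_const_right _ 3 tendsto_natCast_atTop_atTop


lemma interval_identity (L : ℝ) (hL : 0 < L) (yy pp pp' cc ψ : ℝ → ℝ) (Cc : ℝ)
    (hpc : ContinuousOn pp (Icc 0 L)) (hp'c : ContinuousOn pp' (Icc 0 L))
    (hcm : Measurable cc) (hcb : ∀ x ∈ Icc (0:ℝ) L, |cc x| ≤ Cc)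
    (hy2 : IntervalIntegrable (fun x => (yy x)^2) volume 0 L)
    (hψc : ContinuousOn ψ (Icc 0 L))
    (hψd : ∃ s : Finset ℝ, ∀ x ∈ Icc (0:ℝ) L, x ∉ s →
      DifferentiableWithinAt ℝ ψ (Icc 0 L) x)
    (hψ'2 : IntervalIntegrable (fun x => (derivWithin ψ (Icc 0 L) x)^2) volume 0 L)
    (key : ∀ n : ℕ,
      (∫ x in (0:ℝ)..L, (derivWithin (fun t => cutF L (L/((n:ℝ)+3)) t * ψ t) (Icc 0 L) x * pp' x
        + cc x * (cutF L (L/((n:ℝ)+3)) x * ψ x) * pp x))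
      = ∫ x in (0:ℝ)..L, yy x * (cutF L (L/((n:ℝ)+3)) x * ψ x)) :
    ∫ x in (0:ℝ)..L, yy x * ψ x
      = (∫ x in (0:ℝ)..L, (derivWithin ψ (Icc 0 L) x * pp' x + cc x * ψ x * pp x))
        + ψ 0 * pp' 0 - ψ L * pp' L := by
  obtain ⟨s, hs⟩ := hψd
  set ε : ℕ → ℝ := fun n => L/((n:ℝ)+3) with hε_def
  have hε : ∀ n, 0 < ε n := fun n => div_pos hL (by positivity)
  have hε2 : ∀ n, ε n < L/2 := fun n =>
    div_lt_div_of_pos_left hL (by norm_num) (by push_cast; linarith [Nat.cast_nonneg (α := ℝ) n])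
  have hεle : ∀ n, ε n ≤ L := fun n => le_of_lt (lt_of_lt_of_le (hε2 n) (by linarith))
  have hεto : Tendsto ε atTop (nhds 0) := eps_tendsto L
  set μ := volume.restrict (Ioc (0:ℝ) L) with hμ_def
  set ψ' : ℝ → ℝ := fun x => derivWithin ψ (Icc 0 L) x with hψ'def
  set χ : ℕ → ℝ → ℝ := fun n => cutF L (ε n) with hχ_def
  have mIoc : MeasurableSet (Ioc (0:ℝ) L) := measurableSet_Ioc
  -- bounds
  obtain ⟨Mψ, hMψ⟩ := isCompact_Icc.exists_bound_of_continuousOn hψc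
  obtain ⟨Mp, hMp⟩ := isCompact_Icc.exists_bound_of_continuousOn hpc
  obtain ⟨Mp', hMp'⟩ := isCompact_Icc.exists_bound_of_continuousOn hp'c
  have h0mem : (0:ℝ) ∈ Icc (0:ℝ) L := ⟨le_refl 0, hL.le⟩
  have hMψ0 : 0 ≤ Mψ := le_trans (norm_nonneg _) (hMψ 0 h0mem)
  have hMp0 : 0 ≤ Mp := le_trans (norm_nonneg _) (hMp 0 h0mem)
  have hMp'0 : 0 ≤ Mp' := le_trans (norm_nonneg _) (hMp' 0 h0mem)
  have hCc0 : 0 ≤ Cc := le_trans (abs_nonneg _) (hcb 0 h0mem)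
  -- a.e. measurability
  have aeψ : AEStronglyMeasurable ψ μ :=
    (hψc.mono Ioc_subset_Icc_self).aestronglyMeasurable mIoc
  have aep : AEStronglyMeasurable pp μ :=
    (hpc.mono Ioc_subset_Icc_self).aestronglyMeasurable mIoc
  have aep' : AEStronglyMeasurable pp' μ :=
    (hp'c.mono Ioc_subset_Icc_self).aestronglyMeasurable mIoc
  have aeψ' : AEStronglyMeasurable ψ' μ := by
    refine ((measurable_deriv ψ).aestronglyMeasurable).congr ?_
    filter_upwards [ae_aux L ∅] with x hx
    exact (derivWithin_of_mem_nhds (Icc_mem_nhds hx.1.1 hx.1.2)).symm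
  have aec : AEStronglyMeasurable cc μ := hcm.aestronglyMeasurable
  have aeχ : ∀ n, AEStronglyMeasurable (χ n) μ := fun n => (cutF_cont _ _).aestronglyMeasurable
  have aeD : ∀ n, AEStronglyMeasurable (cutD L (ε n)) μ :=
    fun n => (cutD_meas _ _).aestronglyMeasurable
  have memIcc : ∀ᵐ x ∂μ, x ∈ Icc (0:ℝ) L := by
    filter_upwards [ae_restrict_mem mIoc] with x hx using Ioc_subset_Icc_self hx
  -- integrabilities
  have intconst : ∀ c : ℝ, Integrable (fun _ => c) μ :=
    fun c => integrableOn_const measure_Ioc_lt_top.ne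
  have intψ'2 : Integrable (fun x => (ψ' x)^2) μ :=
    (intervalIntegrable_iff_integrableOn_Ioc_of_le hL.le).1 hψ'2
  have inty2 : Integrable (fun x => (yy x)^2) μ :=
    (intervalIntegrable_iff_integrableOn_Ioc_of_le hL.le).1 hy2
  have habsψ' : ∀ x, |ψ' x| ≤ (1 + (ψ' x)^2)/2 := by
    intro x
    nlinarith [sq_nonneg (|ψ' x| - 1), sq_abs (ψ' x), abs_nonneg (ψ' x)]
  have intψ'bnd : Integrable (fun x => (1 + (ψ' x)^2)/2) μ := ((intconst 1).add intψ'2).div_const 2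
  have intψp' : Integrable (fun x => ψ x * pp' x) μ :=
    ((hψc.mul hp'c).integrableOn_Icc).mono_set Ioc_subset_Icc_self
  have i1 : ∀ n, Integrable (fun x => cutD L (ε n) x * (ψ x * pp' x)) μ := by
    intro n
    refine Integrable.mono' (intconst ((1/(ε n)) * (Mψ * Mp'))) ((aeD n).mul (aeψ.mul aep')) ?_
    filter_upwards [memIcc] with x hx
    rw [Real.norm_eq_abs, abs_mul, abs_mul]
    have h1 : |cutD L (ε n) x| ≤ 1/(ε n) := cutD_abs_le (hε n)
    have h2 : |ψ x| ≤ Mψ := by have := hMψ x hx; rwa [Real.norm_eq_abs] at this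
    have h3 : |pp' x| ≤ Mp' := by have := hMp' x hx; rwa [Real.norm_eq_abs] at this
    have := mul_le_mul h2 h3 (abs_nonneg _) hMψ0
    exact mul_le_mul h1 this (by positivity) (by positivity)
  have i2 : ∀ n, Integrable (fun x => χ n x * ψ' x * pp' x) μ := by
    intro n
    refine Integrable.mono' (intψ'bnd.const_mul Mp') (((aeχ n).mul aeψ').mul aep') ?_
    filter_upwards [memIcc] with x hx
    rw [Real.norm_eq_abs, abs_mul, abs_mul]
    have h1 : |χ n x| ≤ 1 := cutF_abs_le_one (hε n) hx
    have h3 : |pp' x| ≤ Mp' := by have := hMp' x hx; rwa [Real.norm_eq_abs] at this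
    calc |χ n x| * |ψ' x| * |pp' x| ≤ 1 * |ψ' x| * Mp' := by
          apply mul_le_mul (mul_le_mul h1 (le_refl _) (abs_nonneg _) zero_le_one) h3
            (abs_nonneg _) (by positivity)
      _ = Mp' * |ψ' x| := by ring
      _ ≤ Mp' * ((1 + (ψ' x)^2)/2) := by
          apply mul_le_mul_of_nonneg_left (habsψ' x) hMp'0
  have i4 : Integrable (fun x => ψ' x * pp' x) μ := by
    refine Integrable.mono' (intψ'bnd.const_mul Mp') (aeψ'.mul aep') ?_
    filter_upwards [memIcc] with x hx
    rw [Real.norm_eq_abs, abs_mul]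
    have h3 : |pp' x| ≤ Mp' := by have := hMp' x hx; rwa [Real.norm_eq_abs] at this
    calc |ψ' x| * |pp' x| ≤ |ψ' x| * Mp' :=
          mul_le_mul_of_nonneg_left h3 (abs_nonneg _)
      _ = Mp' * |ψ' x| := by ring
      _ ≤ Mp' * ((1 + (ψ' x)^2)/2) := mul_le_mul_of_nonneg_left (habsψ' x) hMp'0
  have bnd3 : ∀ n, ∀ᵐ x ∂μ, ‖cc x * (χ n x * ψ x) * pp x‖ ≤ Cc * Mψ * Mp := by
    intro n
    filter_upwards [memIcc] with x hx
    rw [Real.norm_eq_abs, abs_mul, abs_mul, abs_mul]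
    have h1 : |cc x| ≤ Cc := hcb x hx
    have h2 : |χ n x| ≤ 1 := cutF_abs_le_one (hε n) hx
    have h3 : |ψ x| ≤ Mψ := by have := hMψ x hx; rwa [Real.norm_eq_abs] at this
    have h4 : |pp x| ≤ Mp := by have := hMp x hx; rwa [Real.norm_eq_abs] at this
    have hstep : |χ n x| * |ψ x| ≤ 1 * Mψ := mul_le_mul h2 h3 (abs_nonneg _) zero_le_one
    calc |cc x| * (|χ n x| * |ψ x|) * |pp x| ≤ Cc * (1 * Mψ) * Mp := by
          apply mul_le_mul (mul_le_mul h1 hstep (by positivity) hCc0) h4 (abs_nonneg _)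
            (by positivity)
      _ = Cc * Mψ * Mp := by ring
  have i3 : ∀ n, Integrable (fun x => cc x * (χ n x * ψ x) * pp x) μ := by
    intro n
    refine Integrable.mono' (intconst (Cc * Mψ * Mp)) ((aec.mul ((aeχ n).mul aeψ)).mul aep)
      (bnd3 n)
  have i5 : Integrable (fun x => cc x * ψ x * pp x) μ := by
    refine Integrable.mono' (intconst (Cc * Mψ * Mp)) ((aec.mul aeψ).mul aep) ?_
    filter_upwards [memIcc] with x hx
    rw [Real.norm_eq_abs, abs_mul, abs_mul]
    have h1 : |cc x| ≤ Cc := hcb x hx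
    have h3 : |ψ x| ≤ Mψ := by have := hMψ x hx; rwa [Real.norm_eq_abs] at this
    have h4 : |pp x| ≤ Mp := by have := hMp x hx; rwa [Real.norm_eq_abs] at this
    exact mul_le_mul (mul_le_mul h1 h3 (abs_nonneg _) hCc0) h4 (abs_nonneg _) (by positivity)
  have ii : ∀ {f : ℝ → ℝ}, Integrable f μ → IntervalIntegrable f volume 0 L :=
    fun h => (intervalIntegrable_iff_integrableOn_Ioc_of_le hL.le).2 h
  -- a.e. derivative of the cut-off product
  have dw : ∀ n, ∀ᵐ x ∂μ, derivWithin (fun t => χ n t * ψ t) (Icc 0 L) x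
      = cutD L (ε n) x * ψ x + χ n x * ψ' x := by
    intro n
    filter_upwards [ae_aux L (insert (ε n) (insert (L - ε n) s))] with x hx
    obtain ⟨hxIoo, hxs⟩ := hx
    simp only [Finset.mem_insert] at hxs
    push_neg at hxs
    obtain ⟨hne1, hne2, hns⟩ := hxs
    have hxIcc : x ∈ Icc (0:ℝ) L := Ioo_subset_Icc_self hxIoo
    have hχd : HasDerivWithinAt (χ n) (cutD L (ε n) x) (Icc (0:ℝ) L) x :=
      (cutF_hasDerivAt (hε n) (hε2 n) hne1 hne2).hasDerivWithinAt
    have hψx : HasDerivWithinAt ψ (ψ' x) (Icc (0:ℝ) L) x := (hs x hxIcc hns).hasDerivWithinAt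
    exact (hχd.mul hψx).derivWithin (uniqueDiffOn_Icc hL x hxIcc)
  -- split the elliptic integral
  have Fsplit : ∀ n,
      (∫ x in (0:ℝ)..L, (derivWithin (fun t => χ n t * ψ t) (Icc 0 L) x * pp' x
        + cc x * (χ n x * ψ x) * pp x))
      = (∫ x in (0:ℝ)..L, cutD L (ε n) x * (ψ x * pp' x))
        + ∫ x in (0:ℝ)..L, (χ n x * ψ' x * pp' x + cc x * (χ n x * ψ x) * pp x) := by
    intro n
    have h23 : Integrable (fun x => χ n x * ψ' x * pp' x + cc x * (χ n x * ψ x) * pp x) μ :=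
      (i2 n).add (i3 n)
    rw [← intervalIntegral.integral_add (ii (i1 n)) (ii h23)]
    apply intervalIntegral.integral_congr_ae
    rw [uIoc_of_le hL.le]
    have hdw := dw n
    rw [hμ_def, ae_restrict_iff' mIoc] at hdw
    filter_upwards [hdw] with x hx hxIoc
    rw [hx hxIoc]; ring
  -- value of the cutD integral
  have Aval : ∀ n, (∫ x in (0:ℝ)..L, cutD L (ε n) x * (ψ x * pp' x))
      = (1/(ε n)) * (∫ x in (0:ℝ)..(ε n), ψ x * pp' x)
        - (1/(ε n)) * (∫ x in (L - ε n)..L, ψ x * pp' x) := by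
    intro n
    have h1 : ε n ≤ L - ε n := by have := hε2 n; linarith
    have h2 : L - ε n ≤ L := by have := hε n; linarith
    have hbig : IntervalIntegrable (fun x => cutD L (ε n) x * (ψ x * pp' x)) volume 0 L :=
      ii (i1 n)
    have hsub1 : IntervalIntegrable (fun x => cutD L (ε n) x * (ψ x * pp' x)) volume 0 (ε n) := by
      apply hbig.mono_set
      rw [uIcc_of_le (hε n).le, uIcc_of_le hL.le]
      exact Icc_subset_Icc le_rfl (hεle n)
    have hsub2 : IntervalIntegrable (fun x => cutD L (ε n) x * (ψ x * pp' x)) volume (ε n)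
        (L - ε n) := by
      apply hbig.mono_set
      rw [uIcc_of_le h1, uIcc_of_le hL.le]
      exact Icc_subset_Icc (hε n).le h2
    have hsub3 : IntervalIntegrable (fun x => cutD L (ε n) x * (ψ x * pp' x)) volume (L - ε n)
        L := by
      apply hbig.mono_set
      rw [uIcc_of_le h2, uIcc_of_le hL.le]
      exact Icc_subset_Icc (by have := hε n; have := hε2 n; linarith) le_rfl
    have hae1 : ∀ᵐ (x:ℝ) ∂volume, x ≠ ε n := by
      have := (measure_eq_zero_iff_ae_notMem).1 (measure_singleton (ε n) (μ := volume))
      filter_upwards [this] with x hx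
      simpa using hx
    have hae2 : ∀ᵐ (x:ℝ) ∂volume, x ≠ L - ε n := by
      have := (measure_eq_zero_iff_ae_notMem).1 (measure_singleton (L - ε n) (μ := volume))
      filter_upwards [this] with x hx
      simpa using hx
    have c1 : (∫ x in (0:ℝ)..(ε n), cutD L (ε n) x * (ψ x * pp' x))
        = (1/(ε n)) * (∫ x in (0:ℝ)..(ε n), ψ x * pp' x) := by
      rw [← intervalIntegral.integral_const_mul]
      apply intervalIntegral.integral_congr_ae
      rw [uIoc_of_le (hε n).le]
      filter_upwards [hae1] with x hx hxIoc
      have : x < ε n := lt_of_le_of_ne hxIoc.2 hx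
      unfold cutD
      rw [if_pos this]
    have c2 : (∫ x in (ε n)..(L - ε n), cutD L (ε n) x * (ψ x * pp' x)) = 0 := by
      rw [show (0:ℝ) = ∫ x in (ε n)..(L - ε n), (0:ℝ) from (intervalIntegral.integral_zero).symm]
      apply intervalIntegral.integral_congr_ae
      rw [uIoc_of_le h1]
      filter_upwards [hae2] with x hx hxIoc
      have hx1 : ¬ (x < ε n) := not_lt.2 hxIoc.1.le
      have hx2 : ¬ (L - ε n < x) := not_lt.2 (lt_of_le_of_ne hxIoc.2 hx).le
      unfold cutD
      rw [if_neg hx1, if_neg hx2, zero_mul]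
    have c3 : (∫ x in (L - ε n)..L, cutD L (ε n) x * (ψ x * pp' x))
        = -((1/(ε n)) * (∫ x in (L - ε n)..L, ψ x * pp' x)) := by
      rw [← neg_mul, ← intervalIntegral.integral_const_mul]
      apply intervalIntegral.integral_congr_ae
      rw [uIoc_of_le h2]
      filter_upwards with x hxIoc
      have hx1 : ¬ (x < ε n) := by
        have := hε2 n
        exact not_lt.2 (le_of_lt (lt_of_le_of_lt (by linarith) hxIoc.1))
      unfold cutD
      rw [if_neg hx1, if_pos hxIoc.1, neg_mul]
    rw [← intervalIntegral.integral_add_adjacent_intervals hsub1 (hsub2.trans hsub3),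
      ← intervalIntegral.integral_add_adjacent_intervals hsub2 hsub3, c1, c2, c3]
    ring
  -- limit of the boundary terms
  have tendA1 : Tendsto (fun n => (1/(ε n)) * ∫ x in (0:ℝ)..(ε n), ψ x * pp' x) atTop
      (nhds (ψ 0 * pp' 0)) := tendsto_avg_left hL (hψc.mul hp'c) hε hεle hεto
  have tendA2 : Tendsto (fun n => (1/(ε n)) * ∫ x in (L - ε n)..L, ψ x * pp' x) atTop
      (nhds (ψ L * pp' L)) := tendsto_avg_right hL (hψc.mul hp'c) hε hεle hεto
  -- χ converges pointwise to 1 on Ioo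
  have χlim : ∀ x ∈ Ioo (0:ℝ) L, ∀ᶠ n in atTop, χ n x = 1 := by
    intro x hx
    have hc : (0:ℝ) < min x (L - x) := lt_min hx.1 (by linarith [hx.2])
    filter_upwards [hεto.eventually_lt_const hc] with n hn
    exact cutF_eq_one (hε n) (le_of_lt (lt_of_lt_of_le hn (min_le_left _ _)))
      (by have := lt_of_lt_of_le hn (min_le_right _ _); linarith)
  -- limit of the bulk term
  have tendBC : Tendsto (fun n => ∫ x in (0:ℝ)..L,
        (χ n x * ψ' x * pp' x + cc x * (χ n x * ψ x) * pp x)) atTop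
      (nhds (∫ x in (0:ℝ)..L, (ψ' x * pp' x + cc x * ψ x * pp x))) := by
    have conv : ∀ f : ℝ → ℝ, (∫ x in (0:ℝ)..L, f x) = ∫ x, f x ∂μ := by
      intro f
      rw [intervalIntegral.integral_of_le hL.le]
    rw [conv]
    have conv2 : (fun n => ∫ x in (0:ℝ)..L,
        (χ n x * ψ' x * pp' x + cc x * (χ n x * ψ x) * pp x))
        = fun n => ∫ x, (χ n x * ψ' x * pp' x + cc x * (χ n x * ψ x) * pp x) ∂μ := by
      funext n; exact conv _
    rw [conv2]
    apply tendsto_integral_of_dominated_convergence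
      (bound := fun x => Mp' * ((1 + (ψ' x)^2)/2) + Cc * Mψ * Mp)
    · exact fun n => (((aeχ n).mul aeψ').mul aep').add ((aec.mul ((aeχ n).mul aeψ)).mul aep)
    · exact (intψ'bnd.const_mul Mp').add (intconst _)
    · intro n
      filter_upwards [memIcc, bnd3 n] with x hx hb3
      rw [Real.norm_eq_abs]
      have e1 : |χ n x * ψ' x * pp' x| ≤ Mp' * ((1 + (ψ' x)^2)/2) := by
        rw [abs_mul, abs_mul]
        have h1 : |χ n x| ≤ 1 := cutF_abs_le_one (hε n) hx
        have h3 : |pp' x| ≤ Mp' := by have := hMp' x hx; rwa [Real.norm_eq_abs] at this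
        calc |χ n x| * |ψ' x| * |pp' x| ≤ 1 * |ψ' x| * Mp' := by
              apply mul_le_mul (mul_le_mul h1 (le_refl _) (abs_nonneg _) zero_le_one) h3
                (abs_nonneg _) (by positivity)
          _ = Mp' * |ψ' x| := by ring
          _ ≤ Mp' * ((1 + (ψ' x)^2)/2) := mul_le_mul_of_nonneg_left (habsψ' x) hMp'0
      have e2 : |cc x * (χ n x * ψ x) * pp x| ≤ Cc * Mψ * Mp := by
        rw [Real.norm_eq_abs] at hb3; exact hb3
      calc |χ n x * ψ' x * pp' x + cc x * (χ n x * ψ x) * pp x|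
          ≤ |χ n x * ψ' x * pp' x| + |cc x * (χ n x * ψ x) * pp x| := abs_add_le _ _
        _ ≤ Mp' * ((1 + (ψ' x)^2)/2) + Cc * Mψ * Mp := add_le_add e1 e2
    · filter_upwards [ae_aux L ∅] with x hx
      apply Tendsto.congr' ?_ (tendsto_const_nhds)
      filter_upwards [χlim x hx.1] with n hn
      rw [hn]; ring
  -- the full limit
  set Iv : ℝ := ∫ x in (0:ℝ)..L, (ψ' x * pp' x + cc x * ψ x * pp x) with hIv_def
  have keyT : Tendsto (fun n => ∫ x in (0:ℝ)..L, yy x * (χ n x * ψ x)) atTop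
      (nhds (ψ 0 * pp' 0 - ψ L * pp' L + Iv)) := by
    have hfn : ∀ n, ((1/(ε n)) * (∫ x in (0:ℝ)..(ε n), ψ x * pp' x)
        - (1/(ε n)) * (∫ x in (L - ε n)..L, ψ x * pp' x))
        + (∫ x in (0:ℝ)..L, (χ n x * ψ' x * pp' x + cc x * (χ n x * ψ x) * pp x))
        = ∫ x in (0:ℝ)..L, yy x * (χ n x * ψ x) := by
      intro n
      rw [← Aval n, ← Fsplit n]
      exact key n
    exact Tendsto.congr hfn ((tendA1.sub tendA2).add tendBC)
  -- case analysis on integrability of yy·ψ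
  by_cases hyint : IntervalIntegrable (fun x => yy x * ψ x) volume 0 L
  · have hyμ : Integrable (fun x => yy x * ψ x) μ :=
      (intervalIntegrable_iff_integrableOn_Ioc_of_le hL.le).1 hyint
    have hDCT : Tendsto (fun n => ∫ x in (0:ℝ)..L, yy x * (χ n x * ψ x)) atTop
        (nhds (∫ x in (0:ℝ)..L, yy x * ψ x)) := by
      have conv : ∀ f : ℝ → ℝ, (∫ x in (0:ℝ)..L, f x) = ∫ x, f x ∂μ := by
        intro f
        rw [intervalIntegral.integral_of_le hL.le]
      rw [conv]
      have conv2 : (fun n => ∫ x in (0:ℝ)..L, yy x * (χ n x * ψ x))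
          = fun n => ∫ x, χ n x * (yy x * ψ x) ∂μ := by
        funext n
        rw [conv]
        congr 1
        funext x
        ring
      rw [conv2]
      apply tendsto_integral_of_dominated_convergence (bound := fun x => |yy x * ψ x|)
      · exact fun n => (aeχ n).mul hyμ.aestronglyMeasurable
      · exact hyμ.abs
      · intro n
        filter_upwards [memIcc] with x hx
        rw [Real.norm_eq_abs, abs_mul]
        calc |χ n x| * |yy x * ψ x| ≤ 1 * |yy x * ψ x| :=
              mul_le_mul_of_nonneg_right (cutF_abs_le_one (hε n) hx) (abs_nonneg _)
          _ = |yy x * ψ x| := one_mul _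
      · filter_upwards [ae_aux L ∅] with x hx
        apply Tendsto.congr' ?_ (tendsto_const_nhds)
        filter_upwards [χlim x hx.1] with n hn
        rw [hn, one_mul]
    have := tendsto_nhds_unique hDCT keyT
    linarith
  · have h0 : (∫ x in (0:ℝ)..L, yy x * ψ x) = 0 := intervalIntegral.integral_undef hyint
    have hfreq : ∃ᶠ n in atTop,
        ¬ IntervalIntegrable (fun x => yy x * (χ n x * ψ x)) volume 0 L := by
      by_contra hcon
      rw [Filter.not_frequently] at hcon
      simp only [not_not] at hcon
      obtain ⟨N, hN⟩ := eventually_atTop.1 hcon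
      apply hyint
      rw [intervalIntegrable_iff_integrableOn_Ioc_of_le hL.le]
      have haesm : AEStronglyMeasurable (fun x => yy x * ψ x) μ := by
        apply aestronglyMeasurable_of_tendsto_ae (u := atTop)
          (f := fun m x => yy x * (χ (m + N) x * ψ x))
        · intro m
          exact ((intervalIntegrable_iff_integrableOn_Ioc_of_le hL.le).1
            (hN (m + N) (Nat.le_add_left N m))).aestronglyMeasurable
        · filter_upwards [ae_aux L ∅] with x hx
          apply Tendsto.congr' ?_ (tendsto_const_nhds)
          filter_upwards [(tendsto_add_atTop_nat N).eventually (χlim x hx.1)] with m hm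
          rw [hm, one_mul]
      refine Integrable.mono' ((((intconst 1).add inty2).div_const 2).const_mul Mψ) haesm ?_
      filter_upwards [memIcc] with x hx
      rw [Real.norm_eq_abs, abs_mul]
      have h3 : |ψ x| ≤ Mψ := by have := hMψ x hx; rwa [Real.norm_eq_abs] at this
      have habsy : |yy x| ≤ (1 + (yy x)^2)/2 := by
        nlinarith [sq_nonneg (|yy x| - 1), sq_abs (yy x), abs_nonneg (yy x)]
      calc |yy x| * |ψ x| ≤ ((1 + (yy x)^2)/2) * Mψ :=
            mul_le_mul habsy h3 (abs_nonneg _) (by positivity)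
        _ = Mψ * ((1 + (yy x)^2)/2) := by ring
    have hjunk : ∃ᶠ n in atTop, (∫ x in (0:ℝ)..L, yy x * (χ n x * ψ x)) = 0 :=
      hfreq.mono (fun n hn => intervalIntegral.integral_undef hn)
    have hR0 : ψ 0 * pp' 0 - ψ L * pp' L + Iv = 0 := by
      have hfr : ∃ᶠ w in nhds (ψ 0 * pp' 0 - ψ L * pp' L + Iv), w = 0 := keyT.frequently hjunk
      have hcl : (ψ 0 * pp' 0 - ψ L * pp' L + Iv) ∈ closure {(0:ℝ)} :=
        mem_closure_iff_frequently.2 (hfr.mono (fun w hw => by simp [hw]))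
      simpa [closure_singleton] using hcl
    rw [h0]
    linarith

lemma aesm_derivWithin (L : ℝ) (ψ : ℝ → ℝ) :
    AEStronglyMeasurable (fun x => derivWithin ψ (Icc (0:ℝ) L) x)
      (volume.restrict (Ioc (0:ℝ) L)) := by
  refine ((measurable_deriv ψ).aestronglyMeasurable).congr ?_
  filter_upwards [ae_aux L ∅] with x hx
  exact (derivWithin_of_mem_nhds (Icc_mem_nhds hx.1.1 hx.1.2)).symm

lemma cut_mul_deriv_ae {L ε : ℝ} (hL : 0 < L) (hε : 0 < ε) (hεL2 : ε < L/2)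
    (ψ : ℝ → ℝ) (s : Finset ℝ)
    (hs : ∀ x ∈ Icc (0:ℝ) L, x ∉ s → DifferentiableWithinAt ℝ ψ (Icc 0 L) x) :
    ∀ᵐ x ∂(volume.restrict (Ioc (0:ℝ) L)),
      derivWithin (fun t => cutF L ε t * ψ t) (Icc 0 L) x
        = cutD L ε x * ψ x + cutF L ε x * derivWithin ψ (Icc 0 L) x := by
  filter_upwards [ae_aux L (insert ε (insert (L - ε) s))] with x hx
  obtain ⟨hxIoo, hxs⟩ := hx
  simp only [Finset.mem_insert] at hxs
  push_neg at hxs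
  obtain ⟨hne1, hne2, hns⟩ := hxs
  have hxIcc : x ∈ Icc (0:ℝ) L := Ioo_subset_Icc_self hxIoo
  have hχd : HasDerivWithinAt (cutF L ε) (cutD L ε x) (Icc (0:ℝ) L) x :=
    (cutF_hasDerivAt hε hεL2 hne1 hne2).hasDerivWithinAt
  have hψx : HasDerivWithinAt ψ (derivWithin ψ (Icc (0:ℝ) L) x) (Icc (0:ℝ) L) x :=
    (hs x hxIcc hns).hasDerivWithinAt
  exact (hχd.mul hψx).derivWithin (uniqueDiffOn_Icc hL x hxIcc)

lemma cut_mul_deriv_sq_integrable {L ε : ℝ} (hL : 0 < L) (hε : 0 < ε) (hεL2 : ε < L/2)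
    (ψ : ℝ → ℝ) (hψc : ContinuousOn ψ (Icc 0 L)) (s : Finset ℝ)
    (hs : ∀ x ∈ Icc (0:ℝ) L, x ∉ s → DifferentiableWithinAt ℝ ψ (Icc 0 L) x)
    (hψ'2 : IntervalIntegrable (fun x => (derivWithin ψ (Icc 0 L) x)^2) volume 0 L) :
    IntervalIntegrable (fun x => (derivWithin (fun t => cutF L ε t * ψ t) (Icc 0 L) x)^2)
      volume 0 L := by
  set μ := volume.restrict (Ioc (0:ℝ) L) with hμdef
  set ψ' : ℝ → ℝ := fun x => derivWithin ψ (Icc 0 L) x with hψ'def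
  obtain ⟨Mψ, hMψ⟩ := isCompact_Icc.exists_bound_of_continuousOn hψc
  have hMψ0 : 0 ≤ Mψ := le_trans (norm_nonneg _) (hMψ 0 ⟨le_refl 0, hL.le⟩)
  have memIcc : ∀ᵐ x ∂μ, x ∈ Icc (0:ℝ) L := by
    filter_upwards [ae_restrict_mem measurableSet_Ioc] with x hx using Ioc_subset_Icc_self hx
  have aeψ : AEStronglyMeasurable ψ μ :=
    (hψc.mono Ioc_subset_Icc_self).aestronglyMeasurable measurableSet_Ioc
  have aeψ' : AEStronglyMeasurable ψ' μ := aesm_derivWithin L ψ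
  have intψ'2 : Integrable (fun x => (ψ' x)^2) μ :=
    (intervalIntegrable_iff_integrableOn_Ioc_of_le hL.le).1 hψ'2
  have intconst : ∀ c : ℝ, Integrable (fun _ => c) μ :=
    fun c => integrableOn_const measure_Ioc_lt_top.ne
  have hbig : Integrable (fun x => (cutD L ε x * ψ x + cutF L ε x * ψ' x)^2) μ := by
    refine Integrable.mono' ((intconst (2 * ((1/ε) * Mψ)^2)).add ((intψ'2.const_mul 2))) ?_ ?_
    · exact (((cutD_meas L ε).aestronglyMeasurable.mul aeψ).add
        ((cutF_cont L ε).aestronglyMeasurable.mul aeψ')).pow 2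
    · filter_upwards [memIcc] with x hx
      have ha : |cutD L ε x * ψ x| ≤ (1/ε) * Mψ := by
        rw [abs_mul]
        exact mul_le_mul (cutD_abs_le hε)
          (by have := hMψ x hx; rwa [Real.norm_eq_abs] at this) (abs_nonneg _) (by positivity)
      have hb : |cutF L ε x * ψ' x| ≤ |ψ' x| := by
        rw [abs_mul]
        calc |cutF L ε x| * |ψ' x| ≤ 1 * |ψ' x| :=
              mul_le_mul_of_nonneg_right (cutF_abs_le_one hε hx) (abs_nonneg _)
          _ = |ψ' x| := one_mul _
      rw [Real.norm_eq_abs, abs_of_nonneg (sq_nonneg _)]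
      have h1 : (cutD L ε x * ψ x)^2 ≤ ((1/ε) * Mψ)^2 := by
        rw [← sq_abs (cutD L ε x * ψ x)]
        exact pow_le_pow_left₀ (abs_nonneg _) ha 2
      have h2 : (cutF L ε x * ψ' x)^2 ≤ (ψ' x)^2 := by
        rw [← sq_abs (cutF L ε x * ψ' x), ← sq_abs (ψ' x)]
        exact pow_le_pow_left₀ (abs_nonneg _) hb 2
      simp only [Pi.add_apply]
      nlinarith [sq_nonneg (cutD L ε x * ψ x - cutF L ε x * ψ' x)]
  rw [intervalIntegrable_iff_integrableOn_Ioc_of_le hL.le]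
  refine hbig.congr ?_
  filter_upwards [cut_mul_deriv_ae hL hε hεL2 ψ s hs] with x hx
  rw [hx]

end AdjointAux


open AdjointAux in
lemma edge_identity (G : MGraph) (VD : Finset G.V) (c0 : GFun G)
    (hc0meas : ∀ e, Measurable (c0 e))
    (hc0 : ∀ e, ∀ x ∈ Icc (0:ℝ) (G.len e), 0 ≤ c0 e x)
    (hc0b : ∃ C : ℝ, ∀ e, ∀ x ∈ Icc (0:ℝ) (G.len e), c0 e x ≤ C)
    (y : GFun G) (hy : G.MemL2 y)
    (p : GFun G) (hpreg : G.MemH2 p)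
    (hadj : ∀ w wv, G.MemH1D VD w wv → G.bform c0 w p = G.ip2 y w)
    (e : G.E) (ψ : ℝ → ℝ)
    (hψc : ContinuousOn ψ (Icc 0 (G.len e)))
    (hψd : ∃ s : Finset ℝ, ∀ x ∈ Icc (0:ℝ) (G.len e), x ∉ s →
      DifferentiableWithinAt ℝ ψ (Icc 0 (G.len e)) x)
    (hψ'2 : IntervalIntegrable (fun x => (derivWithin ψ (Icc 0 (G.len e)) x)^2) volume 0
      (G.len e)) :
    ∫ x in (0:ℝ)..(G.len e), y e x * ψ x
      = (∫ x in (0:ℝ)..(G.len e), (derivWithin ψ (Icc 0 (G.len e)) x * G.edgeDeriv p e x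
          + c0 e x * ψ x * p e x))
        + ψ 0 * G.edgeDeriv p e 0 - ψ (G.len e) * G.edgeDeriv p e (G.len e) := by
  classical
  set L := G.len e with hLdef
  have hL : 0 < L := G.len_pos e
  obtain ⟨C, hC⟩ := hc0b
  have hpc : ContinuousOn (p e) (Icc 0 L) := fun x hx => (hpreg.1 e x hx).continuousWithinAt
  have hp'c : ContinuousOn (G.edgeDeriv p e) (Icc 0 L) := hpreg.2.1 e
  apply interval_identity L hL (y e) (p e) (G.edgeDeriv p e) (c0 e) ψ (max C 0) hpc hp'c
    (hc0meas e) ?_ (hy e) hψc hψd hψ'2 ?_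
  · intro x hx
    rw [abs_of_nonneg (hc0 e x hx)]
    exact le_max_of_le_left (hC e x hx)
  · -- the key variational identity, from `hadj` applied to a cut-off test function
    intro n
    set ε := L/((n:ℝ)+3) with hεdef
    have hε : 0 < ε := div_pos hL (by positivity)
    have hεL2 : ε < L/2 := div_lt_div_of_pos_left hL (by norm_num)
      (by linarith [Nat.cast_nonneg (α := ℝ) n])
    obtain ⟨s, hs⟩ := hψd
    set w : GFun G := fun e' x => if e' = e then cutF L ε x * ψ x else 0 with hwdef
    have hwe : w e = fun x => cutF L ε x * ψ x := by funext x; simp [hwdef]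
    have hwne : ∀ e', e' ≠ e → w e' = fun _ => 0 := by
      intro e' h; funext x; simp [hwdef, h]
    have hmem : G.MemH1D VD w (fun _ => 0) := by
      refine ⟨⟨?_, ?_, ?_, ?_, ?_, ?_⟩, fun v _ => rfl⟩
      · intro e'
        by_cases h : e' = e
        · subst h; rw [hwe]; exact ((cutF_cont L ε).continuousOn).mul hψc
        · rw [hwne e' h]; exact continuousOn_const
      · intro e'
        by_cases h : e' = e
        · subst h
          refine ⟨insert ε (insert (L - ε) s), fun x hx hxs => ?_⟩
          simp only [Finset.mem_insert] at hxs
          push_neg at hxs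
          obtain ⟨h1, h2, h3⟩ := hxs
          rw [hwe]
          exact ((cutF_hasDerivAt hε hεL2 h1 h2).differentiableAt.differentiableWithinAt).mul
            (hs x hx h3)
        · refine ⟨∅, fun x hx _ => ?_⟩
          rw [hwne e' h]; exact differentiableWithinAt_const _
      · intro e'
        by_cases h : e' = e
        · subst h; rw [hwe]; simp [cutF_zero hε hL.le]
        · rw [hwne e' h]
      · intro e'
        by_cases h : e' = e
        · subst h; rw [hwe]; simp [cutF_len hε hL.le]; exact Or.inl (cutF_len hε hL.le)
        · rw [hwne e' h]
      · intro e'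
        by_cases h : e' = e
        · subst h
          rw [hwe]
          apply ContinuousOn.intervalIntegrable
          rw [uIcc_of_le hL.le]
          exact (((cutF_cont L ε).continuousOn).mul hψc).pow 2
        · rw [hwne e' h]
          exact intervalIntegrable_const
      · intro e'
        by_cases h : e' = e
        · rw [h]
          have : G.edgeDeriv w e = fun x => derivWithin (fun t => cutF L ε t * ψ t)
              (Icc (0:ℝ) L) x := by
            funext x
            unfold MGraph.edgeDeriv
            rw [hwe]
          rw [this]
          exact cut_mul_deriv_sq_integrable hL hε hεL2 ψ hψc s hs hψ'2
        · rw [intervalIntegrable_iff_integrableOn_Ioc_of_le (G.len_pos e').le]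
          refine (integrableOn_const measure_Ioc_lt_top.ne :
            IntegrableOn (fun _ => (0:ℝ)) _ _).congr ?_
          filter_upwards [ae_restrict_mem measurableSet_Ioc] with x hx
          have hxIcc : x ∈ Icc (0:ℝ) (G.len e') := Ioc_subset_Icc_self hx
          show (0:ℝ) = (G.edgeDeriv w e' x)^2
          unfold MGraph.edgeDeriv
          rw [hwne e' h, derivWithin_fun_const, Pi.zero_apply]
          norm_num
    have hkey := hadj w (fun _ => 0) hmem
    have hbl : G.bform c0 w p
        = ∫ x in (0:ℝ)..L, (derivWithin (fun t => cutF L ε t * ψ t) (Icc 0 L) x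
            * G.edgeDeriv p e x + c0 e x * (cutF L ε x * ψ x) * p e x) := by
      unfold MGraph.bform
      rw [Finset.sum_eq_single_of_mem e (Finset.mem_univ e)]
      · apply intervalIntegral.integral_congr
        intro x hx
        simp only [MGraph.edgeDeriv, hwe, hLdef]
      · intro e' _ hne
        have heq : EqOn (fun x => G.edgeDeriv w e' x * G.edgeDeriv p e' x
            + c0 e' x * w e' x * p e' x) (fun _ => (0:ℝ)) (Set.uIcc 0 (G.len e')) := by
          intro x hx
          rw [uIcc_of_le (G.len_pos e').le] at hx
          have h1 : G.edgeDeriv w e' x = 0 := by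
            unfold MGraph.edgeDeriv
            rw [hwne e' hne, derivWithin_fun_const, Pi.zero_apply]
          have h2 : w e' x = 0 := by rw [hwne e' hne]
          show G.edgeDeriv w e' x * G.edgeDeriv p e' x + c0 e' x * w e' x * p e' x = 0
          rw [h1, h2]
          ring
        rw [intervalIntegral.integral_congr heq, intervalIntegral.integral_zero]
    have hil : G.ip2 y w = ∫ x in (0:ℝ)..L, y e x * (cutF L ε x * ψ x) := by
      unfold MGraph.ip2
      rw [Finset.sum_eq_single_of_mem e (Finset.mem_univ e)]
      · apply intervalIntegral.integral_congr
        intro x hx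
        simp only [hwe, hLdef]
      · intro e' _ hne
        have heq : EqOn (fun x => y e' x * w e' x) (fun _ => (0:ℝ))
            (Set.uIcc 0 (G.len e')) := by
          intro x hx
          show y e' x * w e' x = 0
          rw [hwne e' hne]
          ring
        rw [intervalIntegral.integral_congr heq, intervalIntegral.integral_zero]
    rw [hbl, hil] at hkey
    exact hkey


/-- Lemma 2.1: the adjoint of the harmonic extension operator `S` is `-K∘P`,
i.e. `(y, Sz)_{L²(Γ)} = -(K(Py))ᵀ z` for all `y ∈ L²(Γ)` and `z ∈ ℝ^{n_D}`. -/
theorem adjoint_of_harmonic_extension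
    (G : MGraph) (VD : Finset G.V) (c0 : GFun G)
    (hc0meas : ∀ e, Measurable (c0 e))
    (hc0 : ∀ e, ∀ x ∈ Icc (0:ℝ) (G.len e), 0 ≤ c0 e x)
    (hc0b : ∃ C : ℝ, ∀ e, ∀ x ∈ Icc (0:ℝ) (G.len e), c0 e x ≤ C)
    (y : GFun G) (hy : G.MemL2 y)
    (z : G.V → ℝ)
    -- `yz = S z` is the harmonic extension of the Dirichlet data `z`
    (yz : GFun G) (yzv : G.V → ℝ) (hyz : G.MemH1 yz yzv)
    (hyzD : ∀ v ∈ VD, yzv v = z v)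
    (hharm : ∀ w wv, G.MemH1D VD w wv → G.bform c0 yz w = 0)
    -- `p = P y` solves the adjoint problem `a(v,p) = (y,v)` for all `v ∈ H¹_D(Γ)`;
    -- by elliptic regularity `p ∈ H²(Γ)`
    (p : GFun G) (pv : G.V → ℝ) (hp : G.MemH1D VD p pv) (hpreg : G.MemH2 p)
    (hadj : ∀ w wv, G.MemH1D VD w wv → G.bform c0 w p = G.ip2 y w) :
    G.ip2 y yz = -∑ v ∈ VD, G.Kop p v * z v := by
  classical
  -- master integration-by-parts identity
  have master : ∀ (φ : GFun G) (φv : G.V → ℝ), G.MemH1 φ φv →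
      G.ip2 y φ = G.bform c0 φ p
        + ∑ e : G.E, (φv (G.src e) * G.edgeDeriv p e 0
            - φv (G.dst e) * G.edgeDeriv p e (G.len e)) := by
    intro φ φv hφ
    unfold MGraph.ip2 MGraph.bform
    rw [← Finset.sum_add_distrib]
    apply Finset.sum_congr rfl
    intro e _
    obtain ⟨hcont, hdiff, h0v, hLv, hl2, hd2⟩ := hφ
    have hei := edge_identity G VD c0 hc0meas hc0 hc0b y hy p hpreg hadj e (φ e)
      (hcont e) (hdiff e) (hd2 e)
    rw [hei, h0v e, hLv e]
    simp only [MGraph.edgeDeriv]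
    ring
  -- rewriting the boundary sum via the Kirchhoff operator
  have bsum : ∀ (φv : G.V → ℝ),
      ∑ e : G.E, (φv (G.src e) * G.edgeDeriv p e 0
          - φv (G.dst e) * G.edgeDeriv p e (G.len e))
      = - ∑ v : G.V, φv v * G.Kop p v := by
    intro φv
    have hv : ∀ v, φv v * G.Kop p v
        = ∑ e : G.E, (φv v * (if G.dst e = v then G.edgeDeriv p e (G.len e) else 0)
            - φv v * (if G.src e = v then G.edgeDeriv p e 0 else 0)) := by
      intro v
      unfold MGraph.Kop
      rw [Finset.mul_sum]
      apply Finset.sum_congr rfl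
      intro e _
      ring
    rw [Finset.sum_congr rfl (fun v _ => hv v), Finset.sum_comm, ← Finset.sum_neg_distrib]
    apply Finset.sum_congr rfl
    intro e _
    rw [Finset.sum_sub_distrib]
    have hdst : ∑ v : G.V, φv v * (if G.dst e = v then G.edgeDeriv p e (G.len e) else 0)
        = φv (G.dst e) * G.edgeDeriv p e (G.len e) := by
      rw [Finset.sum_congr rfl (fun v _ => by rw [mul_ite, mul_zero])]
      rw [Finset.sum_ite_eq Finset.univ (G.dst e)
        (fun v => φv v * G.edgeDeriv p e (G.len e))]
      simp
    have hsrc : ∑ v : G.V, φv v * (if G.src e = v then G.edgeDeriv p e 0 else 0)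
        = φv (G.src e) * G.edgeDeriv p e 0 := by
      rw [Finset.sum_congr rfl (fun v _ => by rw [mul_ite, mul_zero])]
      rw [Finset.sum_ite_eq Finset.univ (G.src e) (fun v => φv v * G.edgeDeriv p e 0)]
      simp
    rw [hdst, hsrc]
    ring
  -- the Kirchhoff data of p vanishes at interior (non-Dirichlet) vertices
  have hKz : ∀ v, v ∉ VD → G.Kop p v = 0 := by
    intro v hv
    set φ : GFun G := fun e x =>
      (if G.src e = v then 1 - x/(G.len e) else 0)
        + (if G.dst e = v then x/(G.len e) else 0) with hφdef
    set φv : G.V → ℝ := fun u => if u = v then 1 else 0 with hφvdef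
    have hφe : ∀ e, φ e = fun x =>
        (if G.src e = v then 1 - x/(G.len e) else 0)
          + (if G.dst e = v then x/(G.len e) else 0) := fun e => rfl
    have hφcont : ∀ e, Continuous (φ e) := by
      intro e
      rw [hφe e]
      apply Continuous.add <;> split_ifs <;> fun_prop
    have hφder : ∀ e, ∀ x : ℝ, HasDerivAt (φ e)
        ((if G.src e = v then -(1/(G.len e)) else 0)
          + (if G.dst e = v then 1/(G.len e) else 0)) x := by
      intro e x
      rw [hφe e]
      apply HasDerivAt.add
      · split_ifs
        · simpa using ((hasDerivAt_id x).div_const (G.len e)).const_sub 1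
        · exact hasDerivAt_const x 0
      · split_ifs
        · simpa using (hasDerivAt_id x).div_const (G.len e)
        · exact hasDerivAt_const x 0
    have hφderW : ∀ e, ∀ x ∈ Icc (0:ℝ) (G.len e), derivWithin (φ e) (Icc 0 (G.len e)) x
        = (if G.src e = v then -(1/(G.len e)) else 0)
          + (if G.dst e = v then 1/(G.len e) else 0) := by
      intro e x hx
      exact ((hφder e x).hasDerivWithinAt).derivWithin ((uniqueDiffOn_Icc (G.len_pos e)) x hx)
    have hmem1 : G.MemH1 φ φv := by
      refine ⟨fun e => (hφcont e).continuousOn, ?_, ?_, ?_, ?_, ?_⟩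
      · exact fun e => ⟨∅, fun x hx _ => ((hφder e x).differentiableAt).differentiableWithinAt⟩
      · intro e
        rw [hφe e, hφvdef]
        simp
      · intro e
        rw [hφe e, hφvdef]
        simp [div_self (G.len_pos e).ne']
      · intro e
        apply ContinuousOn.intervalIntegrable
        rw [uIcc_of_le (G.len_pos e).le]
        exact ((hφcont e).continuousOn).pow 2
      · intro e
        rw [intervalIntegrable_iff_integrableOn_Ioc_of_le (G.len_pos e).le]
        refine (integrableOn_const measure_Ioc_lt_top.ne :
          IntegrableOn (fun _ => ((if G.src e = v then -(1/(G.len e)) else 0)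
            + (if G.dst e = v then 1/(G.len e) else 0))^2) _ _).congr ?_
        filter_upwards [ae_restrict_mem measurableSet_Ioc] with x hx
        have hxIcc : x ∈ Icc (0:ℝ) (G.len e) := Ioc_subset_Icc_self hx
        show _ = (G.edgeDeriv φ e x)^2
        unfold MGraph.edgeDeriv
        rw [hφderW e x hxIcc]
    have hmemD : G.MemH1D VD φ φv := ⟨hmem1, fun u hu => if_neg (fun h : u = v => hv (h ▸ hu))⟩
    have h1 := hadj φ φv hmemD
    have h2 := master φ φv hmem1
    rw [h1] at h2
    have h3 : ∑ e : G.E, (φv (G.src e) * G.edgeDeriv p e 0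
        - φv (G.dst e) * G.edgeDeriv p e (G.len e)) = 0 := by linarith
    rw [bsum φv] at h3
    have h4 : ∑ u : G.V, φv u * G.Kop p u = G.Kop p v := by
      rw [hφvdef]
      simp only [ite_mul, one_mul, zero_mul]
      rw [Finset.sum_ite_eq' Finset.univ v (fun u => G.Kop p u)]
      simp
    rw [h4] at h3
    linarith
  -- conclusion
  have hyz1 := master yz yzv hyz
  rw [hharm p pv hp, bsum yzv, zero_add] at hyz1
  have hsplit : ∑ v : G.V, yzv v * G.Kop p v = ∑ v ∈ VD, G.Kop p v * z v := by
    rw [← Finset.sum_sdiff (Finset.subset_univ VD)]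
    have hz0 : ∑ v ∈ Finset.univ \ VD, yzv v * G.Kop p v = 0 :=
      Finset.sum_eq_zero (fun v hvm => by
        rw [hKz v (Finset.mem_sdiff.1 hvm).2, mul_zero])
    rw [hz0, zero_add]
    apply Finset.sum_congr rfl
    intro v hvm
    rw [hyzD v hvm, mul_comm]
  rw [hyz1, hsplit]
end

section
/- (Lemma 3.2) There exists a constant c>0, independent of the mesh parameter h, such that the discrete harmonic extension satisfies the stability estimate ‖S_h u‖_{H¹(Γ)} ≤ c |u|₂ for every u ∈ ℝ^{n_D}. -/
open MeasureTheory Set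

section StabilityHelpers

/-- a.e.-measurability of `derivWithin f (Icc 0 L)` on `(0,L]`. -/
lemma aux_deriv_aesm (f : ℝ → ℝ) (L : ℝ) :
    AEStronglyMeasurable (derivWithin f (Icc 0 L)) (volume.restrict (Ioc 0 L)) := by
  have h1 : volume.restrict (Ioc (0:ℝ) L) = volume.restrict (Ioo 0 L) :=
    (Measure.restrict_congr_set Ioo_ae_eq_Ioc).symm
  rw [h1]
  refine (measurable_deriv f).aestronglyMeasurable.congr ?_
  rw [Filter.EventuallyEq, ae_restrict_iff' measurableSet_Ioo]
  exact Filter.Eventually.of_forall fun x hx =>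
    (derivWithin_of_mem_nhds (Icc_mem_nhds hx.1 hx.2)).symm

lemma aux_sq_int_self {L : ℝ} (f : ℝ → ℝ)
    (hf : IntegrableOn (fun x => f x ^ 2) (Ioc 0 L))
    (hm : AEStronglyMeasurable f (volume.restrict (Ioc 0 L))) :
    IntegrableOn f (Ioc 0 L) := by
  have h1 : IntegrableOn (fun x => f x ^ 2 + 1) (Ioc 0 L) volume :=
    hf.add (integrableOn_const measure_Ioc_lt_top.ne)
  refine Integrable.mono' h1 hm (Filter.Eventually.of_forall fun x => ?_)
  show |f x| ≤ f x ^ 2 + 1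
  nlinarith [sq_nonneg (|f x| - 1), sq_abs (f x)]

lemma aux_prod_int {L : ℝ} (f g : ℝ → ℝ)
    (hf : IntegrableOn (fun x => f x ^ 2) (Ioc 0 L))
    (hg : IntegrableOn (fun x => g x ^ 2) (Ioc 0 L))
    (hfm : AEStronglyMeasurable f (volume.restrict (Ioc 0 L)))
    (hgm : AEStronglyMeasurable g (volume.restrict (Ioc 0 L))) :
    IntegrableOn (fun x => f x * g x) (Ioc 0 L) := by
  have h1 : IntegrableOn (fun x => f x ^ 2 + g x ^ 2) (Ioc 0 L) volume := hf.add hg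
  refine Integrable.mono' h1 (hfm.mul hgm)
    (Filter.Eventually.of_forall fun x => ?_)
  show |f x * g x| ≤ f x ^ 2 + g x ^ 2
  nlinarith [sq_nonneg (|f x| - |g x|), sq_abs (f x), sq_abs (g x), abs_mul (f x) (g x),
    abs_nonneg (f x * g x)]

lemma aux_bdd_int {L : ℝ} (f : ℝ → ℝ) (B : ℝ)
    (hm : AEStronglyMeasurable f (volume.restrict (Ioc 0 L)))
    (hB : ∀ x ∈ Ioc (0:ℝ) L, |f x| ≤ B) : IntegrableOn f (Ioc 0 L) := by
  exact Integrable.mono' (g := fun _ => B)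
    (integrableOn_const measure_Ioc_lt_top.ne)
    hm ((ae_restrict_iff' measurableSet_Ioc).mpr (Filter.Eventually.of_forall hB))

lemma aux_cont_bound {L : ℝ} {f : ℝ → ℝ} (hL : 0 < L) (hf : ContinuousOn f (Icc 0 L)) :
    ∃ B : ℝ, 0 ≤ B ∧ ∀ x ∈ Icc (0:ℝ) L, |f x| ≤ B := by
  obtain ⟨x₀, hx₀, hmax⟩ := isCompact_Icc.exists_isMaxOn ⟨0, by simp [hL.le]⟩ hf.abs
  exact ⟨|f x₀|, abs_nonneg _, fun x hx => hmax hx⟩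

lemma aux_mul_div_sq (c L : ℝ) (hL : L ≠ 0) : L * (c / L ^ 2) = c / L := by
  field_simp

lemma aux_div_bound (a b L : ℝ) (hL : 0 < L) : (b - a)^2 / L ≤ 2*(a^2 + b^2) / L := by
  rw [div_le_div_iff₀ hL hL]
  nlinarith [sq_nonneg (a + b), hL]

lemma aux_edge_bound (a b L S I1 I2 : ℝ) (hL : 0 < L) (ha : a^2 ≤ S) (hb : b^2 ≤ S)
    (h1 : I1 ≤ L * (2*(a^2 + b^2))) (h2 : I2 ≤ 2*(a^2 + b^2) / L) :
    I1 + I2 ≤ 4 * (L + 1 / L) * S := by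
  have h3 : L * (2*(a^2+b^2)) ≤ L * (4*S) :=
    mul_le_mul_of_nonneg_left (by linarith) hL.le
  have h4 : (2*(a^2+b^2)) / L ≤ (4*S) / L := by
    rw [div_le_div_iff₀ hL hL]
    nlinarith [hL]
  have h5 : L * (4*S) + (4*S) / L = 4 * (L + 1 / L) * S := by
    field_simp
  linarith

lemma aux_affine_sq_bound (a b L x : ℝ) (hL : 0 < L) (hx : x ∈ Icc (0:ℝ) L) :
    (a + (b - a) * x / L)^2 ≤ 2*(a^2 + b^2) := by
  have hrw : a + (b - a) * x / L = a * (1 - x / L) + b * (x / L) := by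
    field_simp
    ring
  rw [hrw]
  have ht0 : 0 ≤ x / L := div_nonneg hx.1 hL.le
  have ht1 : x / L ≤ 1 := (div_le_one hL).mpr hx.2
  have e1 : 0 ≤ a^2 * ((x / L)*(2 - x / L)) :=
    mul_nonneg (sq_nonneg a) (mul_nonneg ht0 (by linarith))
  have e2 : 0 ≤ b^2 * ((1 - x / L)*(1 + x / L)) :=
    mul_nonneg (sq_nonneg b) (mul_nonneg (by linarith) (by linarith))
  nlinarith [sq_nonneg (a*(1 - x / L) - b*(x / L)), e1, e2]

lemma aux_affine_hasDeriv (A B L x : ℝ) :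
    HasDerivAt (fun x => A + B * x / L) (B / L) x := by
  simpa using (((hasDerivAt_id x).const_mul B).div_const L).const_add A

lemma aux_affine_derivWithin (A B L : ℝ) (hL : 0 < L) {x : ℝ} (hx : x ∈ Icc (0:ℝ) L) :
    derivWithin (fun x => A + B * x / L) (Icc 0 L) x = B / L :=
  (aux_affine_hasDeriv A B L x).hasDerivWithinAt.derivWithin (uniqueDiffOn_Icc hL x hx)

end StabilityHelpers

set_option maxHeartbeats 1600000 in
/-- Lemma 3.2: stability of the discrete harmonic extension,
`‖S_h u‖_{H¹(Γ)} ≤ c |u|₂` with `c` independent of the mesh parameter `h`. -/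
theorem discrete_harmonic_extension_stability
    (G : MGraph) (VD : Finset G.V) (c0 : GFun G)
    (hc0meas : ∀ e, Measurable (c0 e))
    (hc0 : ∀ e, ∀ x ∈ Icc (0:ℝ) (G.len e), 0 ≤ c0 e x)
    (hc0b : ∃ C : ℝ, ∀ e, ∀ x ∈ Icc (0:ℝ) (G.len e), c0 e x ≤ C)
    -- `a` is assumed coercive on `H¹_D(Γ)`
    (hcoer : ∃ α > 0, ∀ y yv, G.MemH1D VD y yv → α * G.h1normSq y ≤ G.bform c0 y y) :
    ∃ c > 0, ∀ (n : G.E → ℕ), (∀ e, 0 < n e) →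
      ∀ (u : G.V → ℝ) (Shu : GFun G) (Shuv : G.V → ℝ),
        G.MemVh n Shu Shuv → (∀ v ∈ VD, Shuv v = u v) →
        (∀ w wv, G.MemVhD VD n w wv → G.bform c0 Shu w = 0) →
        Real.sqrt (G.h1normSq Shu) ≤ c * G.dnorm VD u := by
  classical
  obtain ⟨C, hC⟩ := hc0b
  obtain ⟨α, hα, hco⟩ := hcoer
  set M : ℝ := max C 0 + 1 with hMdef
  have hM1 : (1:ℝ) ≤ M := le_add_of_nonneg_left (le_max_right C 0)
  have hMpos : (0:ℝ) < M := lt_of_lt_of_le one_pos hM1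
  have hc0le : ∀ e, ∀ x ∈ Icc (0:ℝ) (G.len e), c0 e x ≤ M := by
    intro e x hx
    have := hC e x hx
    have := le_max_left C 0
    simp only [hMdef]; linarith
  set K : ℝ := ∑ e : G.E, 4 * (G.len e + 1 / G.len e) with hKdef
  have hKnn : (0:ℝ) ≤ K := by
    rw [hKdef]
    refine Finset.sum_nonneg fun e _ => ?_
    have := G.len_pos e
    positivity
  have hMA : (0:ℝ) ≤ M / α := div_nonneg hMpos.le hα.le
  have hcoefnn : (0:ℝ) ≤ 2 * (1 + M / α) * K := by
    apply mul_nonneg (by linarith) hKnn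
  refine ⟨Real.sqrt (2 * (1 + M / α) * K) + 1, by positivity, ?_⟩
  intro n hn u Shu Shuv hShu hSb horth
  obtain ⟨⟨hScont, hSdiff, hS0, hSL, _hSL2, hSd2⟩, hSaff⟩ := hShu
  choose s hs using hSdiff
  set tyv : G.V → ℝ := fun v => if v ∈ VD then u v else 0 with htyv
  set ty : GFun G := G.tildeExt VD u with hty
  set w : GFun G := fun e x => Shu e x - ty e x with hwdef
  set wv : G.V → ℝ := fun v => Shuv v - tyv v with hwvdef
  set S : ℝ := ∑ v ∈ VD, (u v)^2 with hSdef
  have hSnn : (0:ℝ) ≤ S := Finset.sum_nonneg fun v _ => sq_nonneg _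
  set p : G.E → ℝ := fun e => (tyv (G.dst e) - tyv (G.src e)) / G.len e with hpdef
  -- basic facts about ty
  have htyfun : ∀ e, ty e =
      fun x => tyv (G.src e) + (tyv (G.dst e) - tyv (G.src e)) * x / G.len e := fun e => rfl
  have htyder : ∀ e, ∀ x ∈ Icc (0:ℝ) (G.len e), G.edgeDeriv ty e x = p e := by
    intro e x hx
    have h0 : G.edgeDeriv ty e x = derivWithin
        (fun x => tyv (G.src e) + (tyv (G.dst e) - tyv (G.src e)) * x / G.len e)
        (Icc 0 (G.len e)) x := by rw [MGraph.edgeDeriv, htyfun e]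
    rw [h0, aux_affine_derivWithin _ _ _ (G.len_pos e) hx, hpdef]
  have htycont : ∀ e, Continuous (ty e) := by
    intro e
    rw [htyfun e]
    exact continuous_const.add ((continuous_const.mul continuous_id).div_const _)
  have htyval0 : ∀ e, ty e 0 = tyv (G.src e) := by
    intro e; rw [htyfun e]; simp
  have htyvalL : ∀ e, ty e (G.len e) = tyv (G.dst e) := by
    intro e
    rw [htyfun e]
    have := (G.len_pos e).ne'
    field_simp
    ring
  have hwcont : ∀ e, ContinuousOn (w e) (Icc (0:ℝ) (G.len e)) := by
    intro e
    exact (hScont e).sub (htycont e).continuousOn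
  -- conversion between interval integrability and IntegrableOn
  have conv : ∀ e (f : ℝ → ℝ),
      IntervalIntegrable f volume 0 (G.len e) ↔ IntegrableOn f (Ioc 0 (G.len e)) := by
    intro e f
    rw [intervalIntegrable_iff, uIoc_of_le (G.len_pos e).le]
  -- measurability of the edge derivatives
  have hsm : ∀ (y : GFun G) e,
      AEStronglyMeasurable (G.edgeDeriv y e) (volume.restrict (Ioc 0 (G.len e))) :=
    fun y e => aux_deriv_aesm _ _
  -- square integrability of derivatives
  have hs'sq : ∀ e, IntegrableOn (fun x => (G.edgeDeriv Shu e x)^2) (Ioc 0 (G.len e)) :=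
    fun e => (conv e _).mp (hSd2 e)
  have htyd2 : ∀ e, IntegrableOn (fun x => (G.edgeDeriv ty e x)^2) (Ioc 0 (G.len e)) := by
    intro e
    refine IntegrableOn.congr_fun (f := fun _ => (p e)^2)
      (integrableOn_const measure_Ioc_lt_top.ne) ?_ measurableSet_Ioc
    intro x hx
    show (p e)^2 = G.edgeDeriv ty e x ^ 2
    rw [htyder e x (Ioc_subset_Icc_self hx)]
  -- integrability of the c0 terms
  have hc0prod : ∀ e (y z : ℝ → ℝ), ContinuousOn y (Icc (0:ℝ) (G.len e)) →
      ContinuousOn z (Icc (0:ℝ) (G.len e)) →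
      IntegrableOn (fun x => c0 e x * y x * z x) (Ioc 0 (G.len e)) := by
    intro e y z hy hz
    obtain ⟨By, hBy0, hBy⟩ := aux_cont_bound (G.len_pos e) hy
    obtain ⟨Bz, hBz0, hBz⟩ := aux_cont_bound (G.len_pos e) hz
    refine aux_bdd_int _ (M * By * Bz) ?_ ?_
    · exact (((hc0meas e).aestronglyMeasurable.restrict).mul
        ((hy.mono Ioc_subset_Icc_self).aestronglyMeasurable measurableSet_Ioc)).mul
        ((hz.mono Ioc_subset_Icc_self).aestronglyMeasurable measurableSet_Ioc)
    · intro x hx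
      have hx' := Ioc_subset_Icc_self hx
      have h0 := hc0 e x hx'
      have h1 := hc0le e x hx'
      have h2 := hBy x hx'
      have h3 := hBz x hx'
      calc |c0 e x * y x * z x| = c0 e x * |y x| * |z x| := by
            rw [abs_mul, abs_mul, abs_of_nonneg h0]
        _ ≤ M * By * Bz := by
            apply mul_le_mul (mul_le_mul h1 h2 (abs_nonneg _) hMpos.le) h3 (abs_nonneg _)
              (mul_nonneg hMpos.le hBy0)
  -- a.e. derivative of w
  have hwder : ∀ e, ∀ᵐ x ∂(volume.restrict (Ioo 0 (G.len e))),
      G.edgeDeriv w e x = G.edgeDeriv Shu e x - p e := by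
    intro e
    have hnull : volume ((s e : Set ℝ)) = 0 := (s e).finite_toSet.measure_zero volume
    have hae : ∀ᵐ x ∂(volume.restrict (Ioo 0 (G.len e))), x ∉ (s e : Set ℝ) :=
      ae_restrict_of_ae (measure_eq_zero_iff_ae_notMem.mp hnull)
    filter_upwards [hae, ae_restrict_mem measurableSet_Ioo] with x hxs hx
    have hxI : x ∈ Icc (0:ℝ) (G.len e) := Ioo_subset_Icc_self hx
    have hdS : DifferentiableWithinAt ℝ (Shu e) (Icc 0 (G.len e)) x := hs e x hxI hxs
    have hdty : DifferentiableWithinAt ℝ (ty e) (Icc 0 (G.len e)) x := by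
      rw [htyfun e]
      exact (aux_affine_hasDeriv _ _ _ x).differentiableAt.differentiableWithinAt
    have hsplit : G.edgeDeriv w e x =
        G.edgeDeriv Shu e x - G.edgeDeriv ty e x :=
      derivWithin_fun_sub hdS hdty
    rw [hsplit, htyder e x hxI]
  have hwder_Ioc : ∀ e, ∀ᵐ x ∂(volume.restrict (Ioc 0 (G.len e))),
      G.edgeDeriv w e x = G.edgeDeriv Shu e x - p e := by
    intro e
    have h1 : volume.restrict (Ioc (0:ℝ) (G.len e)) = volume.restrict (Ioo 0 (G.len e)) :=
      (Measure.restrict_congr_set Ioo_ae_eq_Ioc).symm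
    rw [h1]; exact hwder e
  have hwder_Icc : ∀ e, ∀ᵐ x ∂(volume.restrict (Icc 0 (G.len e))),
      G.edgeDeriv w e x = G.edgeDeriv Shu e x - p e := by
    intro e
    have h1 : volume.restrict (Icc (0:ℝ) (G.len e)) = volume.restrict (Ioo 0 (G.len e)) :=
      (Measure.restrict_congr_set Ioo_ae_eq_Icc).symm
    rw [h1]; exact hwder e
  -- square integrability of w'
  have hw'sq : ∀ e, IntegrableOn (fun x => (G.edgeDeriv w e x)^2) (Ioc 0 (G.len e)) := by
    intro e
    have hs'int : IntegrableOn (G.edgeDeriv Shu e) (Ioc 0 (G.len e)) :=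
      aux_sq_int_self _ (hs'sq e) (hsm Shu e)
    have base : IntegrableOn (fun x => (G.edgeDeriv Shu e x - p e)^2) (Ioc 0 (G.len e)) := by
      have h1 : IntegrableOn (fun x => (G.edgeDeriv Shu e x)^2
          - (2 * p e) * G.edgeDeriv Shu e x + (p e)^2) (Ioc 0 (G.len e)) :=
        ((hs'sq e).sub (hs'int.const_mul (2 * p e))).add
          (integrableOn_const measure_Ioc_lt_top.ne)
      exact h1.congr (Filter.Eventually.of_forall fun x => by ring)
    exact base.congr ((hwder_Ioc e).mono fun x hx => by simp [hx])
  -- w belongs to V_{h,D}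
  have hwH1 : G.MemH1 w wv := by
    refine ⟨hwcont, ?_, ?_, ?_, ?_, ?_⟩
    · intro e
      refine ⟨s e, fun x hx hxs => (hs e x hx hxs).sub ?_⟩
      rw [htyfun e]
      exact (aux_affine_hasDeriv _ _ _ x).differentiableAt.differentiableWithinAt
    · intro e
      show Shu e 0 - ty e 0 = Shuv (G.src e) - tyv (G.src e)
      rw [hS0 e, htyval0 e]
    · intro e
      show Shu e (G.len e) - ty e (G.len e) = Shuv (G.dst e) - tyv (G.dst e)
      rw [hSL e, htyvalL e]
    · intro e
      apply ContinuousOn.intervalIntegrable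
      rw [uIcc_of_le (G.len_pos e).le]
      exact (hwcont e).pow 2
    · intro e
      exact (conv e _).mpr (hw'sq e)
  have hwvD : ∀ v ∈ VD, wv v = 0 := by
    intro v hv
    show Shuv v - tyv v = 0
    simp [htyv, hv, hSb v hv]
  have hwVhD : G.MemVhD VD n w wv := by
    refine ⟨⟨hwH1, ?_⟩, hwvD⟩
    intro e k hk
    obtain ⟨p1, q1, hpq⟩ := hSaff e k hk
    refine ⟨p1 - (tyv (G.dst e) - tyv (G.src e)) / G.len e,
      q1 - tyv (G.src e), fun x hx => ?_⟩
    show Shu e x - ty e x = _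
    rw [hpq x hx, htyfun e]
    have := (G.len_pos e).ne'
    field_simp
    ring
  -- integrability of all bilinear-form integrands
  have hbint : ∀ (y z : GFun G) , (∀ e, ContinuousOn (y e) (Icc (0:ℝ) (G.len e))) →
      (∀ e, ContinuousOn (z e) (Icc (0:ℝ) (G.len e))) →
      (∀ e, IntegrableOn (fun x => (G.edgeDeriv y e x)^2) (Ioc 0 (G.len e))) →
      (∀ e, IntegrableOn (fun x => (G.edgeDeriv z e x)^2) (Ioc 0 (G.len e))) →
      ∀ e, IntegrableOn
        (fun x => G.edgeDeriv y e x * G.edgeDeriv z e x + c0 e x * y e x * z e x)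
        (Ioc 0 (G.len e)) := by
    intro y z hyc hzc hy2 hz2 e
    exact (aux_prod_int _ _ (hy2 e) (hz2 e) (hsm y e) (hsm z e)).add
      (hc0prod e _ _ (hyc e) (hzc e))
  have htycont' : ∀ e, ContinuousOn (ty e) (Icc (0:ℝ) (G.len e)) :=
    fun e => (htycont e).continuousOn
  have hint_ss := hbint Shu Shu hScont hScont hs'sq hs'sq
  have hint_ww := hbint w w hwcont hwcont hw'sq hw'sq
  have hint_sw := hbint Shu w hScont hwcont hs'sq hw'sq
  -- the energy identity a(ty,ty) = a(Shu,Shu) + a(w,w) - 2 a(Shu,w)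
  have hIe : ∀ e, (∫ x in (0:ℝ)..(G.len e),
        (G.edgeDeriv ty e x * G.edgeDeriv ty e x + c0 e x * ty e x * ty e x)) =
      (∫ x in (0:ℝ)..(G.len e),
        (G.edgeDeriv Shu e x * G.edgeDeriv Shu e x + c0 e x * Shu e x * Shu e x)) +
      (∫ x in (0:ℝ)..(G.len e),
        (G.edgeDeriv w e x * G.edgeDeriv w e x + c0 e x * w e x * w e x)) -
      2 * (∫ x in (0:ℝ)..(G.len e),
        (G.edgeDeriv Shu e x * G.edgeDeriv w e x + c0 e x * Shu e x * w e x)) := by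
    intro e
    rw [intervalIntegral.integral_of_le (G.len_pos e).le,
        intervalIntegral.integral_of_le (G.len_pos e).le,
        intervalIntegral.integral_of_le (G.len_pos e).le,
        intervalIntegral.integral_of_le (G.len_pos e).le]
    have key : ∀ᵐ x ∂(volume.restrict (Ioc 0 (G.len e))),
        (G.edgeDeriv ty e x * G.edgeDeriv ty e x + c0 e x * ty e x * ty e x) =
        ((G.edgeDeriv Shu e x * G.edgeDeriv Shu e x + c0 e x * Shu e x * Shu e x) +
         (G.edgeDeriv w e x * G.edgeDeriv w e x + c0 e x * w e x * w e x) -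
         2 * (G.edgeDeriv Shu e x * G.edgeDeriv w e x + c0 e x * Shu e x * w e x)) := by
      filter_upwards [hwder_Ioc e, ae_restrict_mem measurableSet_Ioc] with x hx hxI
      have h1 : G.edgeDeriv ty e x = p e := htyder e x (Ioc_subset_Icc_self hxI)
      have h2 : ty e x = Shu e x - w e x := by show ty e x = Shu e x - (Shu e x - ty e x); ring
      rw [h1, h2, hx]
      ring
    have hadd : IntegrableOn (fun x =>
        (G.edgeDeriv Shu e x * G.edgeDeriv Shu e x + c0 e x * Shu e x * Shu e x) +
        (G.edgeDeriv w e x * G.edgeDeriv w e x + c0 e x * w e x * w e x))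
        (Ioc 0 (G.len e)) := (hint_ss e).add (hint_ww e)
    have hmul : IntegrableOn (fun x =>
        2 * (G.edgeDeriv Shu e x * G.edgeDeriv w e x + c0 e x * Shu e x * w e x))
        (Ioc 0 (G.len e)) := (hint_sw e).const_mul 2
    rw [MeasureTheory.integral_congr_ae key,
        MeasureTheory.integral_sub hadd hmul,
        MeasureTheory.integral_add (hint_ss e) (hint_ww e),
        MeasureTheory.integral_const_mul]
  have hBident : G.bform c0 ty ty =
      G.bform c0 Shu Shu + G.bform c0 w w - 2 * G.bform c0 Shu w := by
    simp only [MGraph.bform]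
    rw [Finset.mul_sum, ← Finset.sum_add_distrib, ← Finset.sum_sub_distrib]
    exact Finset.sum_congr rfl fun e _ => hIe e
  have hposS : (0:ℝ) ≤ G.bform c0 Shu Shu := by
    refine Finset.sum_nonneg fun e _ => ?_
    refine intervalIntegral.integral_nonneg (G.len_pos e).le fun x hx => ?_
    have h0 := hc0 e x hx
    refine add_nonneg (mul_self_nonneg _) ?_
    rw [mul_assoc]
    exact mul_nonneg h0 (mul_self_nonneg _)
  have horthw : G.bform c0 Shu w = 0 := horth w wv hwVhD
  have hww : G.bform c0 w w ≤ G.bform c0 ty ty := by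
    rw [hBident, horthw]; linarith
  have hcoerw : α * G.h1normSq w ≤ G.bform c0 w w := hco w wv ⟨hwH1, hwvD⟩
  have contII : ∀ e (f : ℝ → ℝ), ContinuousOn f (Icc (0:ℝ) (G.len e)) →
      IntervalIntegrable f volume 0 (G.len e) := by
    intro e f hf
    apply ContinuousOn.intervalIntegrable
    rw [uIcc_of_le (G.len_pos e).le]
    exact hf
  have hint_tyty := hbint ty ty htycont' htycont' htyd2 htyd2
  -- continuity upper bound:  a(ty,ty) ≤ M ‖ty‖²
  have hCe : ∀ e, (∫ x in (0:ℝ)..(G.len e),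
        (G.edgeDeriv ty e x * G.edgeDeriv ty e x + c0 e x * ty e x * ty e x)) ≤
      M * (∫ x in (0:ℝ)..(G.len e), (ty e x)^2) +
      M * (∫ x in (0:ℝ)..(G.len e), (G.edgeDeriv ty e x)^2) := by
    intro e
    have hL := G.len_pos e
    have hii1 : IntervalIntegrable (fun x => M * (ty e x)^2) volume 0 (G.len e) :=
      contII e _ (continuousOn_const.mul (((htycont e).continuousOn).pow 2))
    have hii2 : IntervalIntegrable (fun x => M * (G.edgeDeriv ty e x)^2) volume 0 (G.len e) :=
      ((conv e _).mpr (htyd2 e)).const_mul M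
    have hiiR : IntervalIntegrable
        (fun x => M * (ty e x)^2 + M * (G.edgeDeriv ty e x)^2) volume 0 (G.len e) :=
      hii1.add hii2
    calc (∫ x in (0:ℝ)..(G.len e),
          (G.edgeDeriv ty e x * G.edgeDeriv ty e x + c0 e x * ty e x * ty e x)) ≤
        (∫ x in (0:ℝ)..(G.len e), (M * (ty e x)^2 + M * (G.edgeDeriv ty e x)^2)) := by
          refine intervalIntegral.integral_mono_on hL.le ((conv e _).mpr (hint_tyty e)) hiiR ?_
          intro x hx
          rw [htyder e x hx]
          have hA := mul_nonneg (sub_nonneg.mpr (hc0le e x hx)) (sq_nonneg (ty e x))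
          have hB := mul_nonneg (sub_nonneg.mpr hM1) (sq_nonneg (p e))
          nlinarith [hA, hB]
      _ = M * (∫ x in (0:ℝ)..(G.len e), (ty e x)^2) +
          M * (∫ x in (0:ℝ)..(G.len e), (G.edgeDeriv ty e x)^2) := by
          rw [intervalIntegral.integral_add hii1 hii2, intervalIntegral.integral_const_mul,
            intervalIntegral.integral_const_mul]
  have hC3 : G.bform c0 ty ty ≤ M * G.h1normSq ty := by
    have hrhs : M * G.h1normSq ty = ∑ e : G.E,
        (M * (∫ x in (0:ℝ)..(G.len e), (ty e x)^2) +
         M * (∫ x in (0:ℝ)..(G.len e), (G.edgeDeriv ty e x)^2)) := by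
      simp only [MGraph.h1normSq, MGraph.l2normSq]
      rw [mul_add, Finset.mul_sum, Finset.mul_sum, ← Finset.sum_add_distrib]
    rw [hrhs]
    exact Finset.sum_le_sum fun e _ => hCe e
  -- explicit bound on ‖ty‖²
  have hDe : ∀ e, (∫ x in (0:ℝ)..(G.len e), (ty e x)^2) +
      (∫ x in (0:ℝ)..(G.len e), (G.edgeDeriv ty e x)^2) ≤
      4 * (G.len e + 1 / G.len e) * S := by
    intro e
    have hL := G.len_pos e
    have ha2 : (tyv (G.src e))^2 ≤ S := by
      by_cases hsrc : G.src e ∈ VD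
      · have h1 : tyv (G.src e) = u (G.src e) := by simp [htyv, hsrc]
        rw [h1, hSdef]
        exact Finset.single_le_sum (fun i _ => sq_nonneg (u i)) hsrc
      · have h1 : tyv (G.src e) = 0 := by simp [htyv, hsrc]
        rw [h1]
        simpa using hSnn
    have hb2 : (tyv (G.dst e))^2 ≤ S := by
      by_cases hdst : G.dst e ∈ VD
      · have h1 : tyv (G.dst e) = u (G.dst e) := by simp [htyv, hdst]
        rw [h1, hSdef]
        exact Finset.single_le_sum (fun i _ => sq_nonneg (u i)) hdst
      · have h1 : tyv (G.dst e) = 0 := by simp [htyv, hdst]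
        rw [h1]
        simpa using hSnn
    set a := tyv (G.src e) with hadef
    set b := tyv (G.dst e) with hbdef
    have h1 : (∫ x in (0:ℝ)..(G.len e), (ty e x)^2) ≤ G.len e * (2*(a^2 + b^2)) := by
      calc (∫ x in (0:ℝ)..(G.len e), (ty e x)^2) ≤
          (∫ _ in (0:ℝ)..(G.len e), (2*(a^2 + b^2) : ℝ)) := by
            refine intervalIntegral.integral_mono_on hL.le
              (contII e _ (((htycont e).continuousOn).pow 2))
              intervalIntegrable_const ?_
            intro x hx
            have hxe : ty e x = a + (b - a) * x / G.len e := by rw [htyfun e]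
            rw [hxe]
            exact aux_affine_sq_bound a b (G.len e) x hL hx
        _ = G.len e * (2*(a^2 + b^2)) := by
            rw [intervalIntegral.integral_const, smul_eq_mul, sub_zero]
    have h2 : (∫ x in (0:ℝ)..(G.len e), (G.edgeDeriv ty e x)^2) ≤ (2*(a^2 + b^2)) / G.len e := by
      have hcg : (∫ x in (0:ℝ)..(G.len e), (G.edgeDeriv ty e x)^2) =
          (∫ _ in (0:ℝ)..(G.len e), ((p e)^2 : ℝ)) := by
        refine intervalIntegral.integral_congr ?_
        intro x hx
        rw [uIcc_of_le hL.le] at hx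
        show (G.edgeDeriv ty e x)^2 = (p e)^2
        rw [htyder e x hx]
      rw [hcg]
      have hpe : p e = (b - a) / G.len e := rfl
      have hval : (∫ _ in (0:ℝ)..(G.len e), ((p e)^2 : ℝ)) = (b - a)^2 / G.len e := by
        rw [hpe, intervalIntegral.integral_const, smul_eq_mul, sub_zero, div_pow,
          aux_mul_div_sq _ _ hL.ne']
      rw [hval]
      exact aux_div_bound a b (G.len e) hL
    exact aux_edge_bound a b (G.len e) S _ _ hL ha2 hb2 h1 h2
  have hD : G.h1normSq ty ≤ K * S := by
    simp only [MGraph.h1normSq, MGraph.l2normSq]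
    rw [hKdef, Finset.sum_mul, ← Finset.sum_add_distrib]
    exact Finset.sum_le_sum fun e _ => hDe e
  -- triangle-type inequality  ‖Shu‖² ≤ 2‖w‖² + 2‖ty‖²
  have hE1 : ∀ e, (∫ x in (0:ℝ)..(G.len e), (Shu e x)^2) ≤
      2 * (∫ x in (0:ℝ)..(G.len e), (w e x)^2) +
      2 * (∫ x in (0:ℝ)..(G.len e), (ty e x)^2) := by
    intro e
    have hL := G.len_pos e
    have hii1 : IntervalIntegrable (fun x => 2 * (w e x)^2) volume 0 (G.len e) :=
      contII e _ (continuousOn_const.mul ((hwcont e).pow 2))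
    have hii2 : IntervalIntegrable (fun x => 2 * (ty e x)^2) volume 0 (G.len e) :=
      contII e _ (continuousOn_const.mul (((htycont e).continuousOn).pow 2))
    calc (∫ x in (0:ℝ)..(G.len e), (Shu e x)^2) ≤
        (∫ x in (0:ℝ)..(G.len e), (2 * (w e x)^2 + 2 * (ty e x)^2)) := by
          refine intervalIntegral.integral_mono_on hL.le
            (contII e _ ((hScont e).pow 2)) (hii1.add hii2) ?_
          intro x _
          have hxe : Shu e x = w e x + ty e x := by
            show Shu e x = (Shu e x - ty e x) + ty e x
            ring
          rw [hxe]
          nlinarith [sq_nonneg (w e x - ty e x)]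
      _ = 2 * (∫ x in (0:ℝ)..(G.len e), (w e x)^2) +
          2 * (∫ x in (0:ℝ)..(G.len e), (ty e x)^2) := by
          rw [intervalIntegral.integral_add hii1 hii2, intervalIntegral.integral_const_mul,
            intervalIntegral.integral_const_mul]
  have hE2 : ∀ e, (∫ x in (0:ℝ)..(G.len e), (G.edgeDeriv Shu e x)^2) ≤
      2 * (∫ x in (0:ℝ)..(G.len e), (G.edgeDeriv w e x)^2) +
      2 * (∫ x in (0:ℝ)..(G.len e), (G.edgeDeriv ty e x)^2) := by
    intro e
    have hL := G.len_pos e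
    have hii1 : IntervalIntegrable (fun x => 2 * (G.edgeDeriv w e x)^2) volume 0 (G.len e) :=
      ((conv e _).mpr (hw'sq e)).const_mul 2
    have hii2 : IntervalIntegrable (fun x => 2 * (G.edgeDeriv ty e x)^2) volume 0 (G.len e) :=
      ((conv e _).mpr (htyd2 e)).const_mul 2
    have hae : (fun x => (G.edgeDeriv Shu e x)^2) ≤ᵐ[volume.restrict (Icc 0 (G.len e))]
        (fun x => 2 * (G.edgeDeriv w e x)^2 + 2 * (G.edgeDeriv ty e x)^2) := by
      filter_upwards [hwder_Icc e, ae_restrict_mem measurableSet_Icc] with x hx hxI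
      show (G.edgeDeriv Shu e x)^2 ≤ 2 * (G.edgeDeriv w e x)^2 + 2 * (G.edgeDeriv ty e x)^2
      rw [htyder e x hxI, hx]
      nlinarith [sq_nonneg (G.edgeDeriv Shu e x - 2 * p e)]
    calc (∫ x in (0:ℝ)..(G.len e), (G.edgeDeriv Shu e x)^2) ≤
        (∫ x in (0:ℝ)..(G.len e),
          (2 * (G.edgeDeriv w e x)^2 + 2 * (G.edgeDeriv ty e x)^2)) :=
          intervalIntegral.integral_mono_ae_restrict hL.le (hSd2 e) (hii1.add hii2) hae
      _ = 2 * (∫ x in (0:ℝ)..(G.len e), (G.edgeDeriv w e x)^2) +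
          2 * (∫ x in (0:ℝ)..(G.len e), (G.edgeDeriv ty e x)^2) := by
          rw [intervalIntegral.integral_add hii1 hii2, intervalIntegral.integral_const_mul,
            intervalIntegral.integral_const_mul]
  have hE : G.h1normSq Shu ≤ 2 * G.h1normSq w + 2 * G.h1normSq ty := by
    simp only [MGraph.h1normSq, MGraph.l2normSq]
    have t1 := Finset.sum_le_sum (fun e (_ : e ∈ Finset.univ) => hE1 e)
    have t2 := Finset.sum_le_sum (fun e (_ : e ∈ Finset.univ) => hE2 e)
    rw [Finset.sum_add_distrib, ← Finset.mul_sum, ← Finset.mul_sum] at t1 t2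
    ring_nf
    ring_nf at t1 t2
    linarith
  -- nonnegativity of ‖ty‖²
  have htynn : (0:ℝ) ≤ G.h1normSq ty := by
    simp only [MGraph.h1normSq, MGraph.l2normSq]
    have h1 : (0:ℝ) ≤ ∑ e : G.E, ∫ x in (0:ℝ)..(G.len e), (ty e x)^2 :=
      Finset.sum_nonneg fun e _ =>
        intervalIntegral.integral_nonneg (G.len_pos e).le fun x _ => sq_nonneg _
    have h2 : (0:ℝ) ≤ ∑ e : G.E, ∫ x in (0:ℝ)..(G.len e), (G.edgeDeriv ty e x)^2 :=
      Finset.sum_nonneg fun e _ =>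
        intervalIntegral.integral_nonneg (G.len_pos e).le fun x _ => sq_nonneg _
    linarith
  -- assembling everything
  have hw1 : G.h1normSq w ≤ (M/α) * G.h1normSq ty := by
    have h := hcoerw.trans (hww.trans hC3)
    rw [div_mul_eq_mul_div, le_div_iff₀ hα]
    linarith [h, mul_comm (G.h1normSq w) α]
  have hfinal : G.h1normSq Shu ≤ (2*(1 + M/α)*K) * S := by
    have c1 : G.h1normSq Shu ≤ 2*((M/α) * G.h1normSq ty) + 2 * G.h1normSq ty := by
      linarith [hE, hw1]
    have c2 : 2*((M/α) * G.h1normSq ty) + 2 * G.h1normSq ty =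
        (2*(1 + M/α)) * G.h1normSq ty := by ring
    have c3 : (2*(1 + M/α)) * G.h1normSq ty ≤ (2*(1 + M/α)) * (K * S) :=
      mul_le_mul_of_nonneg_left hD (by linarith)
    have c4 : (2*(1 + M/α)) * (K * S) = (2*(1 + M/α)*K) * S := by ring
    linarith
  calc Real.sqrt (G.h1normSq Shu) ≤ Real.sqrt ((2*(1 + M/α)*K) * S) :=
        Real.sqrt_le_sqrt hfinal
    _ = Real.sqrt (2*(1 + M/α)*K) * Real.sqrt S := Real.sqrt_mul hcoefnn S
    _ ≤ (Real.sqrt (2*(1 + M/α)*K) + 1) * Real.sqrt S := by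
        nlinarith [Real.sqrt_nonneg S, Real.sqrt_nonneg (2*(1 + M/α)*K)]
    _ = (Real.sqrt (2 * (1 + M / α) * K) + 1) * G.dnorm VD u := by
        rw [MGraph.dnorm, ← hSdef]
end

section
/- Let S̃_h u ∈ V_h denote the edgewise-affine extension of u ∈ ℝ^{n_D}, i.e. the function that is affine on each whole edge e∈E with vertex values (S̃_h u)(v)=u_v for v∈V_D and (S̃_h u)(v)=0 for v∈V_K. Then the discrete harmonic extension satisfies ‖S_h u‖_{H¹(Γ)} ≤ c ‖S̃_h u‖_{H¹(Γ)} with a constant c>0 independent of h and u. -/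
open MeasureTheory Set

lemma abs_mul_le_half_sq (a b : ℝ) : |a * b| ≤ (a^2 + b^2)/2 := by
  rw [abs_mul]
  nlinarith [sq_nonneg (|a| - |b|), sq_abs a, sq_abs b, abs_nonneg a, abs_nonneg b]

lemma mul_intervalIntegrable_of_sq {L : ℝ} (hL : 0 ≤ L) {f g : ℝ → ℝ}
    (hf : AEMeasurable f (volume.restrict (Ioc 0 L)))
    (hg : AEMeasurable g (volume.restrict (Ioc 0 L)))
    (hf2 : IntervalIntegrable (fun x => f x * f x) volume 0 L)
    (hg2 : IntervalIntegrable (fun x => g x * g x) volume 0 L) :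
    IntervalIntegrable (fun x => f x * g x) volume 0 L := by
  rw [intervalIntegrable_iff_integrableOn_Ioc_of_le hL] at hf2 hg2 ⊢
  refine Integrable.mono' ((hf2.add hg2).div_const 2)
    (hf.mul hg).aestronglyMeasurable ?_
  filter_upwards with x
  rw [Real.norm_eq_abs]
  simpa [sq] using abs_mul_le_half_sq (f x) (g x)

lemma c0_mul_intervalIntegrable {L C : ℝ} (hL : 0 < L) {c f g : ℝ → ℝ}
    (hc : Measurable c) (hc0 : ∀ x ∈ Icc (0:ℝ) L, 0 ≤ c x)
    (hcb : ∀ x ∈ Icc (0:ℝ) L, c x ≤ C)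
    (hf : ContinuousOn f (Icc 0 L)) (hg : ContinuousOn g (Icc 0 L)) :
    IntervalIntegrable (fun x => c x * f x * g x) volume 0 L := by
  obtain ⟨B, hB⟩ := isCompact_Icc.exists_bound_of_continuousOn (hf.mul hg)
  have hC : 0 ≤ C := le_trans (hc0 0 (by simp [hL.le])) (hcb 0 (by simp [hL.le]))
  rw [intervalIntegrable_iff_integrableOn_Ioc_of_le hL.le]
  have hmeas : AEMeasurable (fun x => f x * g x) (volume.restrict (Ioc 0 L)) :=
    ((hf.mul hg).mono Ioc_subset_Icc_self).aemeasurable measurableSet_Ioc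
  refine Integrable.mono' (g := fun _ => C * B)
    (integrableOn_const measure_Ioc_lt_top.ne) ?_ ?_
  · have := (hc.aemeasurable (μ := volume.restrict (Ioc 0 L))).mul hmeas
    refine this.aestronglyMeasurable.congr ?_
    filter_upwards with x
    simp [mul_assoc]
  · filter_upwards [ae_restrict_mem measurableSet_Ioc] with x hx
    have hx' := Ioc_subset_Icc_self hx
    have h1 : |c x| = c x := abs_of_nonneg (hc0 x hx')
    have h2 : ‖f x * g x‖ ≤ B := hB x hx'
    calc ‖c x * f x * g x‖ = |c x| * ‖f x * g x‖ := by
            rw [mul_assoc, Real.norm_eq_abs, Real.norm_eq_abs, abs_mul]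
      _ ≤ C * B := mul_le_mul (le_of_eq_of_le h1 (hcb x hx')) h2 (norm_nonneg _) hC

lemma derivWithin_affine {L p q : ℝ} (hL : 0 < L) {f : ℝ → ℝ} (hf : ∀ x, f x = p * x + q)
    {x : ℝ} (hx : x ∈ Icc (0:ℝ) L) : derivWithin f (Icc 0 L) x = p := by
  have hd : HasDerivAt f p x := by
    rw [funext hf]; simpa using ((hasDerivAt_id x).const_mul p).add_const q
  rw [hd.differentiableAt.derivWithin (uniqueDiffOn_Icc hL x hx), hd.deriv]

lemma ae_good {L : ℝ} (s : Finset ℝ) :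
    ∀ᵐ x ∂(volume : Measure ℝ), x ∈ Icc (0:ℝ) L → (x ∈ Ioo (0:ℝ) L ∧ x ∉ s) := by
  have h : (volume : Measure ℝ) ({0, L} ∪ (s : Set ℝ)) = 0 :=
    (((Set.countable_singleton L).insert 0).union s.countable_toSet).measure_zero _
  filter_upwards [measure_eq_zero_iff_ae_notMem.mp h] with x hx hxI
  simp only [Set.mem_union, Set.mem_insert_iff, Set.mem_singleton_iff, not_or,
    Finset.mem_coe] at hx
  exact ⟨⟨lt_of_le_of_ne hxI.1 (Ne.symm hx.1.1), lt_of_le_of_ne hxI.2 hx.1.2⟩, hx.2⟩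


/-- the discrete harmonic extension is bounded by the edgewise-affine
extension, `‖S_h u‖_{H¹(Γ)} ≤ c ‖S̃_h u‖_{H¹(Γ)}` with `c` independent of `h` and `u`. -/
theorem discrete_harmonic_extension_le_affine_extension
    (G : MGraph) (VD : Finset G.V) (c0 : GFun G)
    (hc0meas : ∀ e, Measurable (c0 e))
    (hc0 : ∀ e, ∀ x ∈ Icc (0:ℝ) (G.len e), 0 ≤ c0 e x)
    (hc0b : ∃ C : ℝ, ∀ e, ∀ x ∈ Icc (0:ℝ) (G.len e), c0 e x ≤ C)
    -- `a` is assumed bounded and coercive on `H¹_D(Γ)`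
    (hbdd : ∃ C > 0, ∀ y yv w wv, G.MemH1D VD y yv → G.MemH1D VD w wv →
      |G.bform c0 y w| ≤ C * Real.sqrt (G.h1normSq y) * Real.sqrt (G.h1normSq w))
    (hcoer : ∃ α > 0, ∀ y yv, G.MemH1D VD y yv → α * G.h1normSq y ≤ G.bform c0 y y) :
    ∃ c > 0, ∀ (n : G.E → ℕ), (∀ e, 0 < n e) →
      ∀ (u : G.V → ℝ) (Shu : GFun G) (Shuv : G.V → ℝ),
        G.MemVh n Shu Shuv → (∀ v ∈ VD, Shuv v = u v) →
        (∀ w wv, G.MemVhD VD n w wv → G.bform c0 Shu w = 0) →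
        Real.sqrt (G.h1normSq Shu) ≤ c * Real.sqrt (G.h1normSq (G.tildeExt VD u)) := by
  
  classical
  obtain ⟨C, hC⟩ := hc0b
  obtain ⟨α, hα, hco⟩ := hcoer
  clear hbdd
  set M : ℝ := max 1 C with hM
  have hM1 : (1:ℝ) ≤ M := le_max_left _ _
  have hM0 : (0:ℝ) < M := lt_of_lt_of_le one_pos hM1
  have hcM : ∀ e, ∀ x ∈ Icc (0:ℝ) (G.len e), c0 e x ≤ M := fun e x hx =>
    (hC e x hx).trans (le_max_right _ _)
  have hconst : (0:ℝ) < 2*M/α + 2 := by positivity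
  refine ⟨Real.sqrt (2*M/α + 2), Real.sqrt_pos.2 hconst, ?_⟩
  intro n hn u Shu Shuv hShu hShuD horth
  obtain ⟨⟨hScont, hSdiffE, hS0, hSL, hSL2, hSd2⟩, hSpa⟩ := hShu
  choose sE hsE using hSdiffE
  set t : GFun G := G.tildeExt VD u with htdef
  set tv : G.V → ℝ := fun v => if v ∈ VD then u v else 0 with htvdef
  set w : GFun G := fun e x => Shu e x - t e x with hwdef
  set wv : G.V → ℝ := fun v => Shuv v - tv v with hwvdef
  set pe : G.E → ℝ := fun e =>
    ((if G.dst e ∈ VD then u (G.dst e) else 0)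
      - (if G.src e ∈ VD then u (G.src e) else 0)) / G.len e with hpedef
  set qe : G.E → ℝ := fun e => if G.src e ∈ VD then u (G.src e) else 0 with hqedef
  have hLpos : ∀ e, (0:ℝ) < G.len e := G.len_pos
  have hL0 : ∀ e, (0:ℝ) ≤ G.len e := fun e => (hLpos e).le
  -- `t` is affine on each edge
  have htaff : ∀ e x, t e x = pe e * x + qe e := by
    intro e x
    simp only [htdef, MGraph.tildeExt, hpedef, hqedef]
    ring
  have hthas : ∀ e x, HasDerivAt (t e) (pe e) x := by
    intro e x
    have h : t e = fun y => pe e * y + qe e := funext (htaff e)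
    rw [h]
    simpa using ((hasDerivAt_id x).const_mul (pe e)).add_const (qe e)
  have htcont : ∀ e, ContinuousOn (t e) (Icc 0 (G.len e)) := by
    intro e
    have h : t e = fun y => pe e * y + qe e := funext (htaff e)
    rw [h]
    exact (Continuous.continuousOn (by fun_prop))
  have htderiv : ∀ e, ∀ x ∈ Icc (0:ℝ) (G.len e), G.edgeDeriv t e x = pe e := fun e x hx =>
    derivWithin_affine (hLpos e) (htaff e) hx
  have ht0 : ∀ e, t e 0 = tv (G.src e) := by
    intro e; rw [htaff e 0]; simp [hqedef, htvdef]
  have htL : ∀ e, t e (G.len e) = tv (G.dst e) := by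
    intro e
    rw [htaff e (G.len e)]
    simp only [hpedef, hqedef, htvdef]
    rw [div_mul_cancel₀ _ (hLpos e).ne']
    ring
  have htd2 : ∀ e, IntervalIntegrable (fun x => G.edgeDeriv t e x * G.edgeDeriv t e x)
      volume 0 (G.len e) := by
    intro e
    rw [intervalIntegrable_iff_integrableOn_Ioc_of_le (hL0 e)]
    exact (integrableOn_const measure_Ioc_lt_top.ne :
        IntegrableOn (fun _ => pe e * pe e) _ _).congr_fun
      (fun x hx => by rw [htderiv e x (Ioc_subset_Icc_self hx)]) measurableSet_Ioc
  have hcontInt : ∀ e (f g : ℝ → ℝ), ContinuousOn f (Icc 0 (G.len e)) →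
      ContinuousOn g (Icc 0 (G.len e)) →
      IntervalIntegrable (fun x => f x * g x) volume 0 (G.len e) := by
    intro e f g hf hg
    apply ContinuousOn.intervalIntegrable
    rw [uIcc_of_le (hL0 e)]
    exact hf.mul hg
  have htH1 : G.MemH1 t tv := by
    refine ⟨htcont, fun e => ⟨∅, fun x _ _ =>
        (hthas e x).differentiableAt.differentiableWithinAt⟩,
      ht0, htL, fun e => ?_, fun e => ?_⟩
    · simpa [pow_two] using hcontInt e _ _ (htcont e) (htcont e)
    · simpa [pow_two] using htd2 e
  -- good points
  have hgood : ∀ e, ∀ᵐ x ∂(volume.restrict (Ioc (0:ℝ) (G.len e))),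
      x ∈ Ioo (0:ℝ) (G.len e) ∧ x ∉ sE e := by
    intro e
    filter_upwards [ae_restrict_mem measurableSet_Ioc,
      ae_restrict_of_ae (ae_good (L := G.len e) (sE e))] with x hx1 hx2
    exact hx2 (Ioc_subset_Icc_self hx1)
  have hgood' : ∀ e, ∀ᵐ x ∂(volume.restrict (Icc (0:ℝ) (G.len e))),
      x ∈ Ioo (0:ℝ) (G.len e) ∧ x ∉ sE e := by
    intro e
    filter_upwards [ae_restrict_mem measurableSet_Icc,
      ae_restrict_of_ae (ae_good (L := G.len e) (sE e))] with x hx1 hx2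
    exact hx2 hx1
  have hkey : ∀ e x, x ∈ Ioo (0:ℝ) (G.len e) → x ∉ sE e →
      G.edgeDeriv Shu e x = deriv (Shu e) x ∧
      G.edgeDeriv w e x = deriv (Shu e) x - pe e := by
    intro e x hx hxs
    have hnb : Icc (0:ℝ) (G.len e) ∈ nhds x := Icc_mem_nhds hx.1 hx.2
    have hSd : DifferentiableAt ℝ (Shu e) x :=
      (hsE e x (Ioo_subset_Icc_self hx) hxs).differentiableAt hnb
    refine ⟨derivWithin_of_mem_nhds hnb, ?_⟩
    show derivWithin (w e) (Icc 0 (G.len e)) x = _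
    rw [derivWithin_of_mem_nhds hnb]
    have hwe : w e = fun y => Shu e y - t e y := rfl
    rw [hwe, deriv_fun_sub hSd (hthas e x).differentiableAt, (hthas e x).deriv]
  have hDSmeas : ∀ e, AEMeasurable (G.edgeDeriv Shu e)
      (volume.restrict (Ioc (0:ℝ) (G.len e))) := by
    intro e
    refine (measurable_deriv (Shu e)).aemeasurable.congr ?_
    filter_upwards [hgood e] with x hx
    exact ((hkey e x hx.1 hx.2).1).symm
  have hDWmeas : ∀ e, AEMeasurable (G.edgeDeriv w e)
      (volume.restrict (Ioc (0:ℝ) (G.len e))) := by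
    intro e
    refine AEMeasurable.congr (f := fun x => deriv (Shu e) x - pe e)
      (((measurable_deriv (Shu e)).sub measurable_const).aemeasurable) ?_
    filter_upwards [hgood e] with x hx
    exact ((hkey e x hx.1 hx.2).2).symm
  have hSd2' : ∀ e, IntervalIntegrable (fun x => G.edgeDeriv Shu e x * G.edgeDeriv Shu e x)
      volume 0 (G.len e) := fun e => by simpa [pow_two] using hSd2 e
  have hwd2 : ∀ e, IntervalIntegrable (fun x => G.edgeDeriv w e x * G.edgeDeriv w e x)
      volume 0 (G.len e) := by
    intro e
    rw [intervalIntegrable_iff_integrableOn_Ioc_of_le (hL0 e)]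
    have hDS2 : IntegrableOn (fun x => G.edgeDeriv Shu e x * G.edgeDeriv Shu e x)
        (Ioc 0 (G.len e)) volume :=
      (intervalIntegrable_iff_integrableOn_Ioc_of_le (hL0 e)).mp (hSd2' e)
    refine Integrable.mono'
      (g := fun x => 2 * (G.edgeDeriv Shu e x * G.edgeDeriv Shu e x) + 2 * (pe e * pe e))
      ((hDS2.const_mul 2).add (integrableOn_const measure_Ioc_lt_top.ne))
      (((hDWmeas e).mul (hDWmeas e)).aestronglyMeasurable) ?_
    filter_upwards [hgood e] with x hx
    rw [(hkey e x hx.1 hx.2).2, (hkey e x hx.1 hx.2).1, Real.norm_eq_abs,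
      abs_of_nonneg (mul_self_nonneg _)]
    nlinarith [sq_nonneg (deriv (Shu e) x + pe e)]
  have hwcont : ∀ e, ContinuousOn (w e) (Icc 0 (G.len e)) := by
    intro e
    exact (hScont e).sub (htcont e)
  have hwH1 : G.MemH1 w wv := by
    refine ⟨hwcont, fun e => ⟨sE e, fun x hx hxs =>
        (hsE e x hx hxs).sub (hthas e x).differentiableAt.differentiableWithinAt⟩,
      fun e => ?_, fun e => ?_, fun e => ?_, fun e => ?_⟩
    · show Shu e 0 - t e 0 = wv (G.src e)
      rw [hS0 e, ht0 e]
    · show Shu e (G.len e) - t e (G.len e) = wv (G.dst e)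
      rw [hSL e, htL e]
    · simpa [pow_two] using hcontInt e _ _ (hwcont e) (hwcont e)
    · simpa [pow_two] using hwd2 e
  have hwpa : G.PiecewiseAffine n w := by
    intro e k hk
    obtain ⟨p', q', hpq⟩ := hSpa e k hk
    refine ⟨p' - pe e, q' - qe e, fun x hx => ?_⟩
    show Shu e x - t e x = _
    rw [hpq x hx, htaff e x]; ring
  have hwVhD : G.MemVhD VD n w wv := by
    refine ⟨⟨hwH1, hwpa⟩, fun v hv => ?_⟩
    simp only [hwvdef, htvdef]
    rw [hShuD v hv]
    simp [hv]
  have h0 : G.bform c0 Shu w = 0 := horth w wv hwVhD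
  -- integrability of all bform integrands
  have hIX : ∀ e, IntervalIntegrable
      (fun x => G.edgeDeriv Shu e x * G.edgeDeriv w e x + c0 e x * Shu e x * w e x)
      volume 0 (G.len e) := fun e =>
    (mul_intervalIntegrable_of_sq (hL0 e) (hDSmeas e) (hDWmeas e) (hSd2' e) (hwd2 e)).add
      (c0_mul_intervalIntegrable (hLpos e) (hc0meas e) (hc0 e) (hC e) (hScont e) (hwcont e))
  have hIS : ∀ e, IntervalIntegrable
      (fun x => G.edgeDeriv Shu e x * G.edgeDeriv Shu e x + c0 e x * Shu e x * Shu e x)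
      volume 0 (G.len e) := fun e =>
    (hSd2' e).add (c0_mul_intervalIntegrable (hLpos e) (hc0meas e) (hc0 e) (hC e)
      (hScont e) (hScont e))
  have hIW : ∀ e, IntervalIntegrable
      (fun x => G.edgeDeriv w e x * G.edgeDeriv w e x + c0 e x * w e x * w e x)
      volume 0 (G.len e) := fun e =>
    (hwd2 e).add (c0_mul_intervalIntegrable (hLpos e) (hc0meas e) (hc0 e) (hC e)
      (hwcont e) (hwcont e))
  have hIT : ∀ e, IntervalIntegrable
      (fun x => G.edgeDeriv t e x * G.edgeDeriv t e x + c0 e x * t e x * t e x)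
      volume 0 (G.len e) := fun e =>
    (htd2 e).add (c0_mul_intervalIntegrable (hLpos e) (hc0meas e) (hc0 e) (hC e)
      (htcont e) (htcont e))
  -- the per-edge expansion a(t,t) = a(S,S) + a(w,w) - 2 a(S,w)
  have hsplit : ∀ e,
      (∫ x in (0:ℝ)..(G.len e),
        (G.edgeDeriv t e x * G.edgeDeriv t e x + c0 e x * t e x * t e x))
      = (∫ x in (0:ℝ)..(G.len e),
          (G.edgeDeriv Shu e x * G.edgeDeriv Shu e x + c0 e x * Shu e x * Shu e x))
        + (∫ x in (0:ℝ)..(G.len e),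
          (G.edgeDeriv w e x * G.edgeDeriv w e x + c0 e x * w e x * w e x))
        - 2 * (∫ x in (0:ℝ)..(G.len e),
          (G.edgeDeriv Shu e x * G.edgeDeriv w e x + c0 e x * Shu e x * w e x)) := by
    intro e
    have hcong : (∫ x in (0:ℝ)..(G.len e),
        (G.edgeDeriv t e x * G.edgeDeriv t e x + c0 e x * t e x * t e x))
        = ∫ x in (0:ℝ)..(G.len e),
          ((G.edgeDeriv Shu e x * G.edgeDeriv Shu e x + c0 e x * Shu e x * Shu e x)
          + (G.edgeDeriv w e x * G.edgeDeriv w e x + c0 e x * w e x * w e x)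
          - 2 * (G.edgeDeriv Shu e x * G.edgeDeriv w e x + c0 e x * Shu e x * w e x)) := by
      refine intervalIntegral.integral_congr_ae ?_
      filter_upwards [ae_good (L := G.len e) (sE e)] with x hg hx
      rw [uIoc_of_le (hL0 e)] at hx
      obtain ⟨hxo, hxs⟩ := hg (Ioc_subset_Icc_self hx)
      have h1 := (hkey e x hxo hxs).1
      have h2 := (hkey e x hxo hxs).2
      have h3 : G.edgeDeriv t e x = pe e := htderiv e x (Ioc_subset_Icc_self hx)
      have h4 : w e x = Shu e x - t e x := rfl
      rw [h1, h2, h3, h4]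
      ring
    rw [hcong, intervalIntegral.integral_sub ((hIS e).add (hIW e)) ((hIX e).const_mul 2),
      intervalIntegral.integral_add (hIS e) (hIW e), intervalIntegral.integral_const_mul]
  have hbe : G.bform c0 t t = G.bform c0 Shu Shu + G.bform c0 w w - 2 * G.bform c0 Shu w := by
    simp only [MGraph.bform]
    rw [Finset.sum_congr rfl fun e _ => hsplit e, Finset.sum_sub_distrib,
      Finset.sum_add_distrib, ← Finset.mul_sum]
  have hSnn : 0 ≤ G.bform c0 Shu Shu := by
    refine Finset.sum_nonneg fun e _ =>
      intervalIntegral.integral_nonneg (hL0 e) fun x hx => ?_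
    refine add_nonneg (mul_self_nonneg _) ?_
    rw [mul_assoc]
    exact mul_nonneg (hc0 e x hx) (mul_self_nonneg _)
  -- upper bound a(t,t) ≤ M ‖t‖²
  have hTub : G.bform c0 t t ≤ M * G.h1normSq t := by
    have hedge : ∀ e, (∫ x in (0:ℝ)..(G.len e),
        (G.edgeDeriv t e x * G.edgeDeriv t e x + c0 e x * t e x * t e x))
        ≤ M * (∫ x in (0:ℝ)..(G.len e), t e x * t e x)
          + M * (∫ x in (0:ℝ)..(G.len e), G.edgeDeriv t e x * G.edgeDeriv t e x) := by
      intro e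
      have hItt := hcontInt e _ _ (htcont e) (htcont e)
      have h := intervalIntegral.integral_mono_on (hL0 e) (hIT e)
        ((hItt.const_mul M).add ((htd2 e).const_mul M)) (fun x hx => ?_)
      · rw [intervalIntegral.integral_add (hItt.const_mul M) ((htd2 e).const_mul M),
          intervalIntegral.integral_const_mul, intervalIntegral.integral_const_mul] at h
        exact h
      · have hc1 := hc0 e x hx
        have hc2 := hcM e x hx
        have e1 : c0 e x * t e x * t e x ≤ M * (t e x * t e x) := by
          rw [mul_assoc]
          exact mul_le_mul_of_nonneg_right hc2 (mul_self_nonneg _)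
        have e2 : G.edgeDeriv t e x * G.edgeDeriv t e x
            ≤ M * (G.edgeDeriv t e x * G.edgeDeriv t e x) :=
          le_mul_of_one_le_left (mul_self_nonneg _) hM1
        linarith
    calc G.bform c0 t t
        ≤ ∑ e : G.E, (M * (∫ x in (0:ℝ)..(G.len e), t e x * t e x)
          + M * (∫ x in (0:ℝ)..(G.len e), G.edgeDeriv t e x * G.edgeDeriv t e x)) :=
          Finset.sum_le_sum fun e _ => hedge e
      _ = M * G.h1normSq t := by
          simp only [MGraph.h1normSq, MGraph.l2normSq, pow_two]
          rw [Finset.sum_add_distrib, ← Finset.mul_sum, ← Finset.mul_sum, mul_add]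
  have hwco : α * G.h1normSq w ≤ G.bform c0 w w := hco w wv ⟨hwH1, hwVhD.2⟩
  have hwt : G.bform c0 w w ≤ G.bform c0 t t := by
    rw [hbe, h0]; linarith
  have hwle : G.h1normSq w ≤ M / α * G.h1normSq t := by
    rw [div_mul_eq_mul_div, le_div_iff₀ hα]
    calc G.h1normSq w * α = α * G.h1normSq w := by ring
      _ ≤ M * G.h1normSq t := le_trans hwco (le_trans hwt hTub)
  -- ‖Shu‖² ≤ 2‖w‖² + 2‖t‖²
  have hHle : G.h1normSq Shu ≤ 2 * G.h1normSq w + 2 * G.h1normSq t := by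
    have hL2e : ∀ e, (∫ x in (0:ℝ)..(G.len e), Shu e x * Shu e x)
        ≤ 2 * (∫ x in (0:ℝ)..(G.len e), w e x * w e x)
          + 2 * (∫ x in (0:ℝ)..(G.len e), t e x * t e x) := by
      intro e
      have hIww := hcontInt e _ _ (hwcont e) (hwcont e)
      have hItt := hcontInt e _ _ (htcont e) (htcont e)
      have h := intervalIntegral.integral_mono_on (hL0 e)
        (hcontInt e _ _ (hScont e) (hScont e))
        ((hIww.const_mul 2).add (hItt.const_mul 2)) (fun x _ => ?_)
      · rw [intervalIntegral.integral_add (hIww.const_mul 2) (hItt.const_mul 2),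
          intervalIntegral.integral_const_mul, intervalIntegral.integral_const_mul] at h
        exact h
      · have h4 : Shu e x = w e x + t e x := by
          show Shu e x = (Shu e x - t e x) + t e x
          ring
        rw [h4]
        nlinarith [sq_nonneg (w e x - t e x)]
    have hDe : ∀ e, (∫ x in (0:ℝ)..(G.len e), G.edgeDeriv Shu e x * G.edgeDeriv Shu e x)
        ≤ 2 * (∫ x in (0:ℝ)..(G.len e), G.edgeDeriv w e x * G.edgeDeriv w e x)
          + 2 * (∫ x in (0:ℝ)..(G.len e), G.edgeDeriv t e x * G.edgeDeriv t e x) := by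
      intro e
      have h := intervalIntegral.integral_mono_ae_restrict (hL0 e) (hSd2' e)
        (((hwd2 e).const_mul 2).add ((htd2 e).const_mul 2)) ?_
      · rw [intervalIntegral.integral_add ((hwd2 e).const_mul 2) ((htd2 e).const_mul 2),
          intervalIntegral.integral_const_mul, intervalIntegral.integral_const_mul] at h
        exact h
      · filter_upwards [hgood' e] with x hx
        have h1 := (hkey e x hx.1 hx.2).1
        have h2 := (hkey e x hx.1 hx.2).2
        have h3 := htderiv e x (Ioo_subset_Icc_self hx.1)
        show G.edgeDeriv Shu e x * G.edgeDeriv Shu e x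
          ≤ 2 * (G.edgeDeriv w e x * G.edgeDeriv w e x)
            + 2 * (G.edgeDeriv t e x * G.edgeDeriv t e x)
        rw [h1, h2, h3]
        nlinarith [sq_nonneg (deriv (Shu e) x - 2 * pe e)]
    simp only [MGraph.h1normSq, MGraph.l2normSq, pow_two]
    have hA : (∑ e : G.E, ∫ x in (0:ℝ)..(G.len e), Shu e x * Shu e x)
        ≤ 2 * (∑ e : G.E, ∫ x in (0:ℝ)..(G.len e), w e x * w e x)
          + 2 * (∑ e : G.E, ∫ x in (0:ℝ)..(G.len e), t e x * t e x) := by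
      calc (∑ e : G.E, ∫ x in (0:ℝ)..(G.len e), Shu e x * Shu e x)
          ≤ ∑ e : G.E, (2 * (∫ x in (0:ℝ)..(G.len e), w e x * w e x)
            + 2 * (∫ x in (0:ℝ)..(G.len e), t e x * t e x)) :=
            Finset.sum_le_sum fun e _ => hL2e e
        _ = _ := by rw [Finset.sum_add_distrib, ← Finset.mul_sum, ← Finset.mul_sum]
    have hB : (∑ e : G.E, ∫ x in (0:ℝ)..(G.len e), G.edgeDeriv Shu e x * G.edgeDeriv Shu e x)
        ≤ 2 * (∑ e : G.E, ∫ x in (0:ℝ)..(G.len e), G.edgeDeriv w e x * G.edgeDeriv w e x)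
          + 2 * (∑ e : G.E, ∫ x in (0:ℝ)..(G.len e), G.edgeDeriv t e x * G.edgeDeriv t e x) := by
      calc (∑ e : G.E, ∫ x in (0:ℝ)..(G.len e), G.edgeDeriv Shu e x * G.edgeDeriv Shu e x)
          ≤ ∑ e : G.E, (2 * (∫ x in (0:ℝ)..(G.len e), G.edgeDeriv w e x * G.edgeDeriv w e x)
            + 2 * (∫ x in (0:ℝ)..(G.len e), G.edgeDeriv t e x * G.edgeDeriv t e x)) :=
            Finset.sum_le_sum fun e _ => hDe e
        _ = _ := by rw [Finset.sum_add_distrib, ← Finset.mul_sum, ← Finset.mul_sum]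
    linarith
  have hfin : G.h1normSq Shu ≤ (2*M/α + 2) * G.h1normSq t := by
    have hring : (2*M/α + 2) * G.h1normSq t
        = 2*(M/α*G.h1normSq t) + 2*G.h1normSq t := by ring
    linarith
  calc Real.sqrt (G.h1normSq Shu)
      ≤ Real.sqrt ((2*M/α + 2) * G.h1normSq t) := Real.sqrt_le_sqrt hfin
    _ = Real.sqrt (2*M/α + 2) * Real.sqrt (G.h1normSq t) := Real.sqrt_mul hconst.le _
end
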